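/- arXiv:1506.09182 — 2 statements merged into one kernel-verified Lean document; each statement's English description precedes it below -/
import Mathlib

section
/- For any two framed linear diagrams G_1 and G_2, w_l(ψ_l(G_1 # G_2)) = w_l(ψ_l(G_2 # G_1)), where # denotes concatenation (connected sum) of linear diagrams along the oriented line. -/
open FreeAbelianGroup

/-! ## Basic cyclic/linear combinatorics -/

/-- Cyclic successor on `Fin m`. -/
def cyc {m : ℕ} (p : Fin m) : Fin m :=
  ⟨(p.1 + 1) % m, by have := p.2; exact Nat.mod_lt _ (by omega)⟩

/-- Linear successor on `Fin m` (fixing the last point). -/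
def lsuc {m : ℕ} (p : Fin m) : Fin m :=
  if h : p.1 + 1 < m then ⟨p.1 + 1, h⟩ else p

/-- Rotation by `r` on `Fin m`. -/
def rotF {m : ℕ} (r : ℕ) (p : Fin m) : Fin m :=
  ⟨(p.1 + r) % m, by have := p.2; exact Nat.mod_lt _ (by omega)⟩

/-- The point relocation map: removes the point at position `s` and re-inserts it
at position `t`, shifting the intermediate points; it sends old positions to new
positions. -/
def reloc {m : ℕ} (s t : Fin m) (i : Fin m) : Fin m :=
  if s.1 ≤ t.1 then
    (if i = s then t else if h : s.1 < i.1 ∧ i.1 ≤ t.1 then ⟨i.1 - 1, by have := i.2; omega⟩ else i)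
  else
    (if i = s then t else if h : t.1 ≤ i.1 ∧ i.1 < s.1 then ⟨i.1 + 1, by have := s.2; omega⟩ else i)

/-- The "other end" of the chord passing through `p`, for a chord-labelling
function `c` in which every chord label occurs exactly twice. -/
noncomputable def otherPt {α : Type} [Fintype α] [DecidableEq α] {n : ℕ}
    (c : α → Fin n) (p : α) : α :=
  if h : (Finset.univ.filter fun q => c q = c p ∧ q ≠ p).Nonempty then h.choose else p

/-- Number of orbits of the equivalence relation generated by `r`. -/
noncomputable def orbitCount {α : Type} (r : α → α → Prop) : ℕ :=
  Nat.card (Quotient (Relation.EqvGen.setoid r))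

/-! ## Chord diagrams on one circle -/

/-- A chord diagram with `n` chords: `2n` points on an oriented circle labelled by
chords, each chord having exactly two endpoints. -/
structure CD (n : ℕ) where
  c : Fin (2 * n) → Fin n
  two : ∀ j, Fintype.card {p // c p = j} = 2

/-- A framed chord diagram: a chord diagram with a framing in `ℤ/2ℤ` on each chord. -/
structure FCD (n : ℕ) where
  c : Fin (2 * n) → Fin n
  fr : Fin n → ZMod 2
  two : ∀ j, Fintype.card {p // c p = j} = 2

/-- The number of connected components of the one-manifold obtained by surgery
along all chords of a chord diagram: traversing the surgered curve, the strand
arriving at a point `p` continues from the point right after the other end of the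
chord at `p`. -/
noncomputable def betaCD {n : ℕ} (D : CD n) : ℕ :=
  orbitCount (fun p q => cyc (otherPt D.c p) = q)

/-- Chords `j` and `k` appear in alternating (interleaved) position, with an
endpoint of `j` first. -/
def AltOrd {n : ℕ} (c : Fin (2 * n) → Fin n) (j k : Fin n) : Prop :=
  ∃ p₁ q₁ p₂ q₂ : Fin (2 * n), c p₁ = j ∧ c p₂ = j ∧ c q₁ = k ∧ c q₂ = k ∧
    p₁ < q₁ ∧ q₁ < p₂ ∧ p₂ < q₂

/-- Two chords are interleaved (linked) if their endpoints alternate around the circle. -/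
def Interleaved {n : ℕ} (c : Fin (2 * n) → Fin n) (j k : Fin n) : Prop :=
  AltOrd c j k ∨ AltOrd c k j

open Classical in
/-- The interlacement (intersection) matrix over `GF(2)`. -/
noncomputable def interMatrix {n : ℕ} (c : Fin (2 * n) → Fin n) :
    Matrix (Fin n) (Fin n) (ZMod 2) :=
  fun j k => if j ≠ k ∧ Interleaved c j k then 1 else 0

/-- `β` of a framed chord diagram, defined as `corank (A(D) + F(D)) + 1` over `GF(2)`. -/
noncomputable def betaFCD {n : ℕ} (D : FCD n) : ℕ :=
  (n - (interMatrix D.c + Matrix.diagonal D.fr).rank) + 1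

/-- The 2T-relation for chord diagrams: chords `a` and `b`, appearing in
non-interleaved position `a b … b a`, have their endpoints commuted at both
adjacent pairs simultaneously. -/
def TwoTCD {n : ℕ} (D D' : CD n) : Prop :=
  ∃ (p q : Fin (2 * n)) (a b : Fin n), a ≠ b ∧
    p ≠ q ∧ cyc p ≠ q ∧ p ≠ cyc q ∧
    ¬ Interleaved D.c a b ∧
    D.c p = a ∧ D.c (cyc p) = b ∧ D.c q = b ∧ D.c (cyc q) = a ∧
    D'.c p = b ∧ D'.c (cyc p) = a ∧ D'.c q = a ∧ D'.c (cyc q) = b ∧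
    (∀ r, r ≠ p → r ≠ cyc p → r ≠ q → r ≠ cyc q → D'.c r = D.c r)

/-- The framed 2T-relation: as `TwoTCD`, with framings preserved. -/
def TwoTFCD {n : ℕ} (D D' : FCD n) : Prop :=
  ∃ (p q : Fin (2 * n)) (a b : Fin n), a ≠ b ∧
    p ≠ q ∧ cyc p ≠ q ∧ p ≠ cyc q ∧
    ¬ Interleaved D.c a b ∧
    D.c p = a ∧ D.c (cyc p) = b ∧ D.c q = b ∧ D.c (cyc q) = a ∧
    D'.c p = b ∧ D'.c (cyc p) = a ∧ D'.c q = a ∧ D'.c (cyc q) = b ∧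
    (∀ r, r ≠ p → r ≠ cyc p → r ≠ q → r ≠ cyc q → D'.c r = D.c r) ∧
    D'.fr = D.fr

/-- Isomorphism of chord diagrams: a rotation of the core circle together with a
relabelling of the chords. -/
def IsoCD {n : ℕ} (D D' : CD n) : Prop :=
  ∃ (π : Equiv.Perm (Fin n)) (r : ℕ), ∀ p, D'.c p = π (D.c (rotF r p))

/-- Isomorphism of framed chord diagrams. -/
def IsoFCD {n : ℕ} (D D' : FCD n) : Prop :=
  ∃ (π : Equiv.Perm (Fin n)) (r : ℕ),
    (∀ p, D'.c p = π (D.c (rotF r p))) ∧ (∀ j, D'.fr (π j) = D.fr j)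

/-- The 4T-relation quadruple for chord diagrams, with active chords `a`, `b`:
`D₂` is obtained from `D₁` by sliding the endpoint `x = cyc y₁` of `b` past the
endpoint `y₁` of `a`, and `D₄` is obtained from `D₃` by the same slide past the
other endpoint `y₂` of `a`, where `D₃` is `D₁` with `x` relocated next to `y₂`. -/
def FourTQuadCD {n : ℕ} (D₁ D₂ D₃ D₄ : CD n) (a b : Fin n) : Prop :=
  ∃ (y₁ y₂ t : Fin (2 * n)), a ≠ b ∧
    D₁.c y₁ = a ∧ D₁.c y₂ = a ∧ D₁.c (cyc y₁) = b ∧ y₂ ≠ y₁ ∧ y₂ ≠ cyc y₁ ∧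
    (D₂.c y₁ = b ∧ D₂.c (cyc y₁) = a ∧
      ∀ r, r ≠ y₁ → r ≠ cyc y₁ → D₂.c r = D₁.c r) ∧
    (D₃.c ∘ reloc (cyc y₁) t = D₁.c) ∧
    t = cyc (reloc (cyc y₁) t y₂) ∧
    (D₄.c (reloc (cyc y₁) t y₂) = D₃.c t ∧ D₄.c t = D₃.c (reloc (cyc y₁) t y₂) ∧
      ∀ r, r ≠ reloc (cyc y₁) t y₂ → r ≠ t → D₄.c r = D₃.c r)

/-- The framed 4T-relation quadruple (all framing combinations allowed, framings preserved). -/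
def FourTQuadFCD {n : ℕ} (D₁ D₂ D₃ D₄ : FCD n) (a b : Fin n) : Prop :=
  ∃ (y₁ y₂ t : Fin (2 * n)), a ≠ b ∧
    D₁.c y₁ = a ∧ D₁.c y₂ = a ∧ D₁.c (cyc y₁) = b ∧ y₂ ≠ y₁ ∧ y₂ ≠ cyc y₁ ∧
    (D₂.c y₁ = b ∧ D₂.c (cyc y₁) = a ∧
      ∀ r, r ≠ y₁ → r ≠ cyc y₁ → D₂.c r = D₁.c r) ∧
    (D₃.c ∘ reloc (cyc y₁) t = D₁.c) ∧
    t = cyc (reloc (cyc y₁) t y₂) ∧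
    (D₄.c (reloc (cyc y₁) t y₂) = D₃.c t ∧ D₄.c t = D₃.c (reloc (cyc y₁) t y₂) ∧
      ∀ r, r ≠ reloc (cyc y₁) t y₂ → r ≠ t → D₄.c r = D₃.c r) ∧
    D₂.fr = D₁.fr ∧ D₃.fr = D₁.fr ∧ D₄.fr = D₁.fr

/-- Chord diagrams of all sizes. -/
def CDAll : Type := Σ n : ℕ, CD n

/-- Framed chord diagrams of all sizes. -/
def FCDAll : Type := Σ n : ℕ, FCD n

/-- Relators for the module `M` of chord diagrams: isomorphism relators and
4T-relators. -/
def cdRelators : Set (FreeAbelianGroup CDAll) :=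
  {x | (∃ (n : ℕ) (D D' : CD n), IsoCD D D' ∧ x = of ⟨n, D⟩ - of ⟨n, D'⟩) ∨
    (∃ (n : ℕ) (D₁ D₂ D₃ D₄ : CD n) (a b : Fin n), FourTQuadCD D₁ D₂ D₃ D₄ a b ∧
      x = of ⟨n, D₁⟩ - of ⟨n, D₂⟩ - of ⟨n, D₃⟩ + of ⟨n, D₄⟩)}

/-- Relators for the module `M^f` of framed chord diagrams. -/
def fcdRelators : Set (FreeAbelianGroup FCDAll) :=
  {x | (∃ (n : ℕ) (D D' : FCD n), IsoFCD D D' ∧ x = of ⟨n, D⟩ - of ⟨n, D'⟩) ∨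
    (∃ (n : ℕ) (D₁ D₂ D₃ D₄ : FCD n) (a b : Fin n), FourTQuadFCD D₁ D₂ D₃ D₄ a b ∧
      x = of ⟨n, D₁⟩ - of ⟨n, D₂⟩ - of ⟨n, D₃⟩ + of ⟨n, D₄⟩)}

/-- The module `M` of chord diagrams modulo 4T-relations. -/
abbrev ModM : Type := FreeAbelianGroup CDAll ⧸ AddSubgroup.closure cdRelators

/-- The module `M^f` of framed chord diagrams modulo framed 4T-relations. -/
abbrev ModMf : Type := FreeAbelianGroup FCDAll ⧸ AddSubgroup.closure fcdRelators

noncomputable def mkM : FreeAbelianGroup CDAll →+ ModM :=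
  QuotientAddGroup.mk' _

noncomputable def mkMf : FreeAbelianGroup FCDAll →+ ModMf :=
  QuotientAddGroup.mk' _

/-- `C` is a connected sum of `A` and `B`: for some choice of cut points
(rotations `r₁`, `r₂`), the chords of `A` occupy one arc of `C` and the chords of
`B` the complementary arc, in the same cyclic orders. -/
def IsConnSumCD {n₁ n₂ : ℕ} (A : CD n₁) (B : CD n₂) (C : CD (n₁ + n₂)) : Prop :=
  ∃ r₁ r₂ : ℕ,
    (∀ (i : Fin (2 * (n₁ + n₂))) (hi : i.1 < 2 * n₁),
      C.c i = Fin.castAdd n₂ (A.c ⟨(i.1 + r₁) % (2 * n₁), Nat.mod_lt _ (by omega)⟩)) ∧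
    (∀ (i : Fin (2 * (n₁ + n₂))) (hi : 2 * n₁ ≤ i.1),
      C.c i = Fin.natAdd n₁ (B.c ⟨(i.1 - 2 * n₁ + r₂) % (2 * n₂),
        Nat.mod_lt _ (by have := i.2; omega)⟩))

/-- `C` is a connected sum of the framed chord diagrams `A` and `B`. -/
def IsConnSumFCD {n₁ n₂ : ℕ} (A : FCD n₁) (B : FCD n₂) (C : FCD (n₁ + n₂)) : Prop :=
  (∃ r₁ r₂ : ℕ,
    (∀ (i : Fin (2 * (n₁ + n₂))) (hi : i.1 < 2 * n₁),
      C.c i = Fin.castAdd n₂ (A.c ⟨(i.1 + r₁) % (2 * n₁), Nat.mod_lt _ (by omega)⟩)) ∧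
    (∀ (i : Fin (2 * (n₁ + n₂))) (hi : 2 * n₁ ≤ i.1),
      C.c i = Fin.natAdd n₁ (B.c ⟨(i.1 - 2 * n₁ + r₂) % (2 * n₂),
        Nat.mod_lt _ (by have := i.2; omega)⟩))) ∧
    (∀ j, C.fr (Fin.castAdd n₂ j) = A.fr j) ∧ (∀ j, C.fr (Fin.natAdd n₁ j) = B.fr j)
/-! ## Double chord diagrams (chord diagrams on two circles) -/

/-- A double chord diagram with `n` chords and `m₁`, `m₂` marked points on the two
oriented core circles. -/
structure DCD (n m₁ m₂ : ℕ) where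
  c : Fin m₁ ⊕ Fin m₂ → Fin n
  two : ∀ j, Fintype.card {p // c p = j} = 2

/-- Simultaneous cyclic successor on the points of the two circles. -/
def cycS {m₁ m₂ : ℕ} : Fin m₁ ⊕ Fin m₂ → Fin m₁ ⊕ Fin m₂ := Sum.map cyc cyc

/-- The number of connected components of the one-manifold obtained by surgery
along all chords of a double chord diagram (a core circle without chord endpoints
contributes one component). -/
noncomputable def betaDCD {n m₁ m₂ : ℕ} (G : DCD n m₁ m₂) : ℕ :=
  orbitCount (fun p q => cycS (otherPt G.c p) = q) +
    (if m₁ = 0 then 1 else 0) + (if m₂ = 0 then 1 else 0)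

/-- The 2T-relation for double chord diagrams: the endpoints of two chords `a`,
`b`, occurring in two adjacent pairs `a b` and `b a`, are commuted at both pairs
simultaneously. -/
def TwoTDCD {n m₁ m₂ : ℕ} (G G' : DCD n m₁ m₂) : Prop :=
  ∃ (p q : Fin m₁ ⊕ Fin m₂) (a b : Fin n), a ≠ b ∧
    p ≠ q ∧ cycS p ≠ q ∧ p ≠ cycS q ∧
    G.c p = a ∧ G.c (cycS p) = b ∧ G.c q = b ∧ G.c (cycS q) = a ∧
    G'.c p = b ∧ G'.c (cycS p) = a ∧ G'.c q = a ∧ G'.c (cycS q) = b ∧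
    (∀ r, r ≠ p → r ≠ cycS p → r ≠ q → r ≠ cycS q → G'.c r = G.c r)

/-- Isomorphism of double chord diagrams: rotations of the two core circles
together with a relabelling of the chords. -/
def IsoDCD {n m₁ m₂ : ℕ} (G G' : DCD n m₁ m₂) : Prop :=
  ∃ (π : Equiv.Perm (Fin n)) (r₁ r₂ : ℕ),
    ∀ p, G'.c p = π (G.c (Sum.map (rotF r₁) (rotF r₂) p))

/-- Double chord diagrams of all sizes. -/
def DCDAll : Type := Σ (n m₁ m₂ : ℕ), DCD n m₁ m₂

/-- Relators for the module `M₂` of double chord diagrams: isomorphism relators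
and 4T-relators, each 4T-relator being a difference of two 2T-differences. -/
def dcdRelators : Set (FreeAbelianGroup DCDAll) :=
  {x | (∃ (n m₁ m₂ : ℕ) (G G' : DCD n m₁ m₂), IsoDCD G G' ∧
          x = of ⟨n, m₁, m₂, G⟩ - of ⟨n, m₁, m₂, G'⟩) ∨
    (∃ (n m₁ m₂ : ℕ) (G₁ G₂ G₃ G₄ : DCD n m₁ m₂),
      TwoTDCD G₁ G₂ ∧ TwoTDCD G₃ G₄ ∧
      x = of ⟨n, m₁, m₂, G₁⟩ - of ⟨n, m₁, m₂, G₂⟩ - of ⟨n, m₁, m₂, G₃⟩ + of ⟨n, m₁, m₂, G₄⟩)}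

/-- The module `M₂` of double chord diagrams modulo 4T-relations. -/
abbrev ModM2 : Type := FreeAbelianGroup DCDAll ⧸ AddSubgroup.closure dcdRelators

noncomputable def mkM2 : FreeAbelianGroup DCDAll →+ ModM2 :=
  QuotientAddGroup.mk' _

/-- The weight system `w` on linear combinations of double chord diagrams, given
by the number of connected components of the surgery one-manifold. -/
noncomputable def wDCD : FreeAbelianGroup DCDAll →+ ℤ :=
  FreeAbelianGroup.lift fun G => (betaDCD G.2.2.2 : ℤ)

/-! ## The parity map ψ -/

section Psi

variable {n : ℕ} (D : FCD n) (ε : Fin n → Bool)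

/-- The side on which the endpoint `p` is placed, for the choice `ε`: a chord of
framing `0` has both endpoints on the circle chosen by `ε`, a chord of framing `1`
has its endpoints on the two different circles. -/
noncomputable def psiSide (p : Fin (2 * n)) : Bool :=
  if D.fr (D.c p) = 0 then ε (D.c p)
  else xor (ε (D.c p)) (decide (otherPt D.c p < p))

/-- The points placed on the first circle. -/
noncomputable def psiS1 : Finset (Fin (2 * n)) :=
  Finset.univ.filter fun p => psiSide D ε p = false

/-- The points placed on the second circle. -/
noncomputable def psiS2 : Finset (Fin (2 * n)) :=
  Finset.univ.filter fun p => ¬ psiSide D ε p = false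

noncomputable def psiM1 : ℕ := (psiS1 D ε).card
noncomputable def psiM2 : ℕ := (psiS2 D ε).card

/-- Identification of the points of the summand of `ψ` with the points of `D`:
the first circle keeps the order of the core circle of `D`, the second circle
carries the reversed orientation. -/
noncomputable def psiEquiv : (Fin (psiM1 D ε) ⊕ Fin (psiM2 D ε)) ≃ Fin (2 * n) :=
  (Equiv.sumCongr
    (((psiS1 D ε).orderIsoOfFin rfl).toEquiv.trans
      (Equiv.subtypeEquivRight fun x => by simp [psiS1]))
    ((Fin.revPerm.trans ((psiS2 D ε).orderIsoOfFin rfl).toEquiv).trans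
      (Equiv.subtypeEquivRight fun x => by simp [psiS2]))).trans
    (Equiv.sumCompl fun x => psiSide D ε x = false)

/-- The summand of `ψ(D)` corresponding to the choice `ε`. -/
noncomputable def psiSummand : DCD n (psiM1 D ε) (psiM2 D ε) where
  c := D.c ∘ psiEquiv D ε
  two := fun j =>
    (Fintype.card_congr ((psiEquiv D ε).subtypeEquiv fun _ => Iff.rfl)).trans (D.two j)

/-- The summand of `ψ(D)` as an element of `DCDAll`. -/
noncomputable def psiSummandAll : DCDAll :=
  ⟨n, psiM1 D ε, psiM2 D ε, psiSummand D ε⟩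

/-- The parity map `ψ` on a framed chord diagram: the sum of the `2^n` double
chord diagrams obtained by distributing the chords over the two circles. -/
noncomputable def psi : FreeAbelianGroup DCDAll :=
  ∑ ε : Fin n → Bool, of (psiSummandAll D ε)

end Psi
/-! ## Framed linear diagrams -/

/-- A framed linear diagram: `2n` points on an oriented line, paired into `n`
arcs, each arc carrying a framing in `ℤ/2ℤ`. -/
structure FLD (n : ℕ) where
  c : Fin (2 * n) → Fin n
  fr : Fin n → ZMod 2
  two : ∀ j, Fintype.card {p // c p = j} = 2

/-- The closure of a framed linear diagram: joining the two ends of the line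
into an oriented circle. -/
def Cl {n : ℕ} (G : FLD n) : FCD n := ⟨G.c, G.fr, G.two⟩

/-- Isomorphism of framed linear diagrams (relabelling of arcs). -/
def IsoFLD {n : ℕ} (D D' : FLD n) : Prop :=
  ∃ π : Equiv.Perm (Fin n),
    (∀ p, D'.c p = π (D.c p)) ∧ (∀ j, D'.fr (π j) = D.fr j)

/-- The linear 4T-relation quadruple for framed linear diagrams (as the circular
one, with linear adjacency). -/
def FourTQuadFLD {n : ℕ} (D₁ D₂ D₃ D₄ : FLD n) (a b : Fin n) : Prop :=
  ∃ (y₁ y₂ t : Fin (2 * n)), a ≠ b ∧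
    y₁.1 + 1 < 2 * n ∧ (reloc (lsuc y₁) t y₂).1 + 1 < 2 * n ∧
    D₁.c y₁ = a ∧ D₁.c y₂ = a ∧ D₁.c (lsuc y₁) = b ∧ y₂ ≠ y₁ ∧ y₂ ≠ lsuc y₁ ∧
    (D₂.c y₁ = b ∧ D₂.c (lsuc y₁) = a ∧
      ∀ r, r ≠ y₁ → r ≠ lsuc y₁ → D₂.c r = D₁.c r) ∧
    (D₃.c ∘ reloc (lsuc y₁) t = D₁.c) ∧
    t = lsuc (reloc (lsuc y₁) t y₂) ∧
    (D₄.c (reloc (lsuc y₁) t y₂) = D₃.c t ∧ D₄.c t = D₃.c (reloc (lsuc y₁) t y₂) ∧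
      ∀ r, r ≠ reloc (lsuc y₁) t y₂ → r ≠ t → D₄.c r = D₃.c r) ∧
    D₂.fr = D₁.fr ∧ D₃.fr = D₁.fr ∧ D₄.fr = D₁.fr

/-- Framed linear diagrams of all sizes. -/
def FLDAll : Type := Σ n : ℕ, FLD n

/-- Relators for the module `L^f` of framed linear diagrams. -/
def fldRelators : Set (FreeAbelianGroup FLDAll) :=
  {x | (∃ (n : ℕ) (D D' : FLD n), IsoFLD D D' ∧ x = of ⟨n, D⟩ - of ⟨n, D'⟩) ∨
    (∃ (n : ℕ) (D₁ D₂ D₃ D₄ : FLD n) (a b : Fin n), FourTQuadFLD D₁ D₂ D₃ D₄ a b ∧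
      x = of ⟨n, D₁⟩ - of ⟨n, D₂⟩ - of ⟨n, D₃⟩ + of ⟨n, D₄⟩)}

/-- The module `L^f` of framed linear diagrams modulo linear 4T-relations. -/
abbrev ModLf : Type := FreeAbelianGroup FLDAll ⧸ AddSubgroup.closure fldRelators

noncomputable def mkLf : FreeAbelianGroup FLDAll →+ ModLf :=
  QuotientAddGroup.mk' _

/-! ## Double linear diagrams -/

/-- A double linear diagram with `n` arcs and `m₁`, `m₂` marked points on the two
oriented lines. -/
structure DLD (n m₁ m₂ : ℕ) where
  c : Fin m₁ ⊕ Fin m₂ → Fin n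
  two : ∀ j, Fintype.card {p // c p = j} = 2

/-- The segment of the lines lying immediately before the point `p` (the lines with
`mᵢ` marked points consist of `mᵢ + 1` segments). -/
def segBefore {m₁ m₂ : ℕ} : Fin m₁ ⊕ Fin m₂ → Fin (m₁ + 1) ⊕ Fin (m₂ + 1) :=
  Sum.map Fin.castSucc Fin.castSucc

/-- The segment of the lines lying immediately after the point `p`. -/
def segAfter {m₁ m₂ : ℕ} : Fin m₁ ⊕ Fin m₂ → Fin (m₁ + 1) ⊕ Fin (m₂ + 1) :=
  Sum.map Fin.succ Fin.succ

/-- The number of connected components of the one-manifold obtained by surgery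
along all arcs of a double linear diagram: the strand arriving at a point `p`
continues on the segment following the other end of the arc at `p`. -/
noncomputable def betaDLD {n m₁ m₂ : ℕ} (G : DLD n m₁ m₂) : ℕ :=
  orbitCount (fun s t : Fin (m₁ + 1) ⊕ Fin (m₂ + 1) =>
    ∃ p, s = segBefore p ∧ t = segAfter (otherPt G.c p))

/-- Simultaneous linear successor on the points of the two lines. -/
def lsucS {m₁ m₂ : ℕ} : Fin m₁ ⊕ Fin m₂ → Fin m₁ ⊕ Fin m₂ := Sum.map lsuc lsuc

/-- The linear 2T-relation for double linear diagrams. -/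
def TwoTDLD {n m₁ m₂ : ℕ} (G G' : DLD n m₁ m₂) : Prop :=
  ∃ (p q : Fin m₁ ⊕ Fin m₂) (a b : Fin n), a ≠ b ∧
    lsucS p ≠ p ∧ lsucS q ≠ q ∧
    p ≠ q ∧ lsucS p ≠ q ∧ p ≠ lsucS q ∧
    G.c p = a ∧ G.c (lsucS p) = b ∧ G.c q = b ∧ G.c (lsucS q) = a ∧
    G'.c p = b ∧ G'.c (lsucS p) = a ∧ G'.c q = a ∧ G'.c (lsucS q) = b ∧
    (∀ r, r ≠ p → r ≠ lsucS p → r ≠ q → r ≠ lsucS q → G'.c r = G.c r)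

/-- Isomorphism of double linear diagrams (relabelling of arcs). -/
def IsoDLD {n m₁ m₂ : ℕ} (G G' : DLD n m₁ m₂) : Prop :=
  ∃ π : Equiv.Perm (Fin n), ∀ p, G'.c p = π (G.c p)

/-- Double linear diagrams of all sizes. -/
def DLDAll : Type := Σ (n m₁ m₂ : ℕ), DLD n m₁ m₂

/-- Relators for the module `L₂` of double linear diagrams. -/
def dldRelators : Set (FreeAbelianGroup DLDAll) :=
  {x | (∃ (n m₁ m₂ : ℕ) (G G' : DLD n m₁ m₂), IsoDLD G G' ∧
          x = of ⟨n, m₁, m₂, G⟩ - of ⟨n, m₁, m₂, G'⟩) ∨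
    (∃ (n m₁ m₂ : ℕ) (G₁ G₂ G₃ G₄ : DLD n m₁ m₂),
      TwoTDLD G₁ G₂ ∧ TwoTDLD G₃ G₄ ∧
      x = of ⟨n, m₁, m₂, G₁⟩ - of ⟨n, m₁, m₂, G₂⟩ - of ⟨n, m₁, m₂, G₃⟩ + of ⟨n, m₁, m₂, G₄⟩)}

/-- The module `L₂` of double linear diagrams modulo linear 4T-relations. -/
abbrev ModL2 : Type := FreeAbelianGroup DLDAll ⧸ AddSubgroup.closure dldRelators

noncomputable def mkL2 : FreeAbelianGroup DLDAll →+ ModL2 :=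
  QuotientAddGroup.mk' _

/-- The weight system `w_l` on linear combinations of double linear diagrams. -/
noncomputable def wDLD : FreeAbelianGroup DLDAll →+ ℤ :=
  FreeAbelianGroup.lift fun G => (betaDLD G.2.2.2 : ℤ)

/-! ## The parity map ψₗ for linear diagrams -/

section PsiL

variable {n : ℕ} (D : FLD n) (ε : Fin n → Bool)

/-- The side on which the endpoint `p` is placed, for the choice `ε`. -/
noncomputable def psiLSide (p : Fin (2 * n)) : Bool :=
  if D.fr (D.c p) = 0 then ε (D.c p)
  else xor (ε (D.c p)) (decide (otherPt D.c p < p))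

noncomputable def psiLS1 : Finset (Fin (2 * n)) :=
  Finset.univ.filter fun p => psiLSide D ε p = false

noncomputable def psiLS2 : Finset (Fin (2 * n)) :=
  Finset.univ.filter fun p => ¬ psiLSide D ε p = false

noncomputable def psiLM1 : ℕ := (psiLS1 D ε).card
noncomputable def psiLM2 : ℕ := (psiLS2 D ε).card

/-- Identification of the points of the summand of `ψₗ` with the points of `D`;
the second line carries the reversed orientation. -/
noncomputable def psiLEquiv : (Fin (psiLM1 D ε) ⊕ Fin (psiLM2 D ε)) ≃ Fin (2 * n) :=
  (Equiv.sumCongr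
    (((psiLS1 D ε).orderIsoOfFin rfl).toEquiv.trans
      (Equiv.subtypeEquivRight fun x => by simp [psiLS1]))
    ((Fin.revPerm.trans ((psiLS2 D ε).orderIsoOfFin rfl).toEquiv).trans
      (Equiv.subtypeEquivRight fun x => by simp [psiLS2]))).trans
    (Equiv.sumCompl fun x => psiLSide D ε x = false)

/-- The summand of `ψₗ(D)` corresponding to the choice `ε`. -/
noncomputable def psiLSummand : DLD n (psiLM1 D ε) (psiLM2 D ε) where
  c := D.c ∘ psiLEquiv D ε
  two := fun j =>
    (Fintype.card_congr ((psiLEquiv D ε).subtypeEquiv fun _ => Iff.rfl)).trans (D.two j)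

/-- The summand of `ψₗ(D)` as an element of `DLDAll`. -/
noncomputable def psiLSummandAll : DLDAll :=
  ⟨n, psiLM1 D ε, psiLM2 D ε, psiLSummand D ε⟩

/-- The parity map `ψₗ` on a framed linear diagram. -/
noncomputable def psiL : FreeAbelianGroup DLDAll :=
  ∑ ε : Fin n → Bool, of (psiLSummandAll D ε)

end PsiL

/-! ## Concatenation of linear diagrams -/

/-- Identification of the points of `G₁ # G₂` with the points of `G₁` and `G₂`. -/
def concatEquiv (n₁ n₂ : ℕ) : Fin (2 * (n₁ + n₂)) ≃ (Fin (2 * n₁) ⊕ Fin (2 * n₂)) :=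
  (finCongr (by ring)).trans finSumFinEquiv.symm

/-- The connected sum (concatenation) `G₁ # G₂` of two framed linear diagrams. -/
def concatFLD {n₁ n₂ : ℕ} (G₁ : FLD n₁) (G₂ : FLD n₂) : FLD (n₁ + n₂) where
  c := Sum.elim (Fin.castAdd n₂ ∘ G₁.c) (Fin.natAdd n₁ ∘ G₂.c) ∘ concatEquiv n₁ n₂
  fr := Sum.elim G₁.fr G₂.fr ∘ finSumFinEquiv.symm
  two := by
    intro j
    set P : Fin (2 * n₁) ⊕ Fin (2 * n₂) → Fin (n₁ + n₂) :=
      Sum.elim (Fin.castAdd n₂ ∘ G₁.c) (Fin.natAdd n₁ ∘ G₂.c) with hP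
    have e1 : Fintype.card {p // (P ∘ concatEquiv n₁ n₂) p = j} =
        Fintype.card {q // P q = j} :=
      Fintype.card_congr ((concatEquiv n₁ n₂).subtypeEquiv fun _ => Iff.rfl)
    have e2 : Fintype.card {q // P q = j} =
        Fintype.card {x : Fin (2 * n₁) // P (Sum.inl x) = j} +
          Fintype.card {y : Fin (2 * n₂) // P (Sum.inr y) = j} := by
      rw [Fintype.card_congr (Equiv.subtypeSum (p := fun q => P q = j))]
      exact Fintype.card_sum
    show Fintype.card {p // (P ∘ concatEquiv n₁ n₂) p = j} = 2
    rw [e1, e2]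
    induction j using Fin.addCases with
    | left j =>
      have h2 : Fintype.card {y : Fin (2 * n₂) // P (Sum.inr y) = Fin.castAdd n₂ j} = 0 := by
        rw [Fintype.card_eq_zero_iff]
        refine ⟨fun ⟨y, hy⟩ => ?_⟩
        have hj := j.2
        simp only [hP, Sum.elim_inr, Function.comp_apply, Fin.ext_iff,
          Fin.coe_natAdd, Fin.coe_castAdd] at hy
        omega
      have h1 : Fintype.card {x : Fin (2 * n₁) // P (Sum.inl x) = Fin.castAdd n₂ j} = 2 := by
        rw [Fintype.card_congr (Equiv.subtypeEquivRight
          (p := fun x => P (Sum.inl x) = Fin.castAdd n₂ j)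
          (q := fun x => G₁.c x = j) fun x => by
          simp only [hP, Sum.elim_inl, Function.comp_apply, Fin.castAdd_inj])]
        exact G₁.two j
      omega
    | right j =>
      have h1 : Fintype.card {x : Fin (2 * n₁) // P (Sum.inl x) = Fin.natAdd n₁ j} = 0 := by
        rw [Fintype.card_eq_zero_iff]
        refine ⟨fun ⟨x, hx⟩ => ?_⟩
        have hx2 := (G₁.c x).2
        simp only [hP, Sum.elim_inl, Function.comp_apply, Fin.ext_iff,
          Fin.coe_natAdd, Fin.coe_castAdd] at hx
        omega
      have h2 : Fintype.card {y : Fin (2 * n₂) // P (Sum.inr y) = Fin.natAdd n₁ j} = 2 := by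
        rw [Fintype.card_congr (Equiv.subtypeEquivRight
          (p := fun y => P (Sum.inr y) = Fin.natAdd n₁ j)
          (q := fun y => G₂.c y = j) fun y => by
          simp only [hP, Sum.elim_inr, Function.comp_apply, Fin.ext_iff,
            Fin.coe_natAdd]
          omega)]
        exact G₂.two j
      omega

/-- `G` is the marked concatenation (connected sum) of the double linear diagrams
`X` and `Y`: the first (resp. second) line of `X` is glued to the beginning of the
first (resp. second) line of `Y`. -/
def IsConcatDLD {n n' a₁ a₂ b₁ b₂ : ℕ} (X : DLD n a₁ a₂) (Y : DLD n' b₁ b₂)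
    (G : DLD (n + n') (a₁ + b₁) (a₂ + b₂)) : Prop :=
  (∀ i : Fin a₁, G.c (Sum.inl (Fin.castAdd b₁ i)) = Fin.castAdd n' (X.c (Sum.inl i))) ∧
  (∀ i : Fin b₁, G.c (Sum.inl (Fin.natAdd a₁ i)) = Fin.natAdd n (Y.c (Sum.inl i))) ∧
  (∀ i : Fin a₂, G.c (Sum.inr (Fin.castAdd b₂ i)) = Fin.castAdd n' (X.c (Sum.inr i))) ∧
  (∀ i : Fin b₂, G.c (Sum.inr (Fin.natAdd a₂ i)) = Fin.natAdd n (Y.c (Sum.inr i)))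

/-- The marked concatenation relation on double linear diagrams of arbitrary sizes. -/
def IsConcatDLDAll (x y z : DLDAll) : Prop :=
  ∃ (n n' a₁ a₂ b₁ b₂ : ℕ) (X : DLD n a₁ a₂) (Y : DLD n' b₁ b₂)
    (G : DLD (n + n') (a₁ + b₁) (a₂ + b₂)),
    x = ⟨n, a₁, a₂, X⟩ ∧ y = ⟨n', b₁, b₂, Y⟩ ∧ z = ⟨n + n', a₁ + b₁, a₂ + b₂, G⟩ ∧
    IsConcatDLD X Y G
/-! ## Symmetries of double chord diagrams -/

/-- The double chord diagram obtained by simultaneously reversing the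
orientations of both core circles. -/
noncomputable def revBoth {n m₁ m₂ : ℕ} (G : DCD n m₁ m₂) : DCD n m₁ m₂ where
  c := G.c ∘ (Equiv.sumCongr (Fin.revPerm (n := m₁)) (Fin.revPerm (n := m₂)))
  two := fun j =>
    (Fintype.card_congr ((Equiv.sumCongr (Fin.revPerm (n := m₁))
      (Fin.revPerm (n := m₂))).subtypeEquiv fun _ => Iff.rfl)).trans (G.two j)

/-- The double chord diagram obtained by exchanging the two core circles. -/
noncomputable def swapCirc {n m₁ m₂ : ℕ} (G : DCD n m₁ m₂) : DCD n m₂ m₁ where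
  c := G.c ∘ (Equiv.sumComm (Fin m₂) (Fin m₁))
  two := fun j =>
    (Fintype.card_congr ((Equiv.sumComm (Fin m₂) (Fin m₁)).subtypeEquiv
      fun _ => Iff.rfl)).trans (G.two j)

/-- Isomorphism of double chord diagrams of arbitrary sizes. -/
def IsoDCDAll (x y : DCDAll) : Prop :=
  ∃ (n m₁ m₂ : ℕ) (G G' : DCD n m₁ m₂),
    x = ⟨n, m₁, m₂, G⟩ ∧ y = ⟨n, m₁, m₂, G'⟩ ∧ IsoDCD G G'

/-- Exchanging the two circles combined with reversing both orientations. -/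
noncomputable def swapRevAll (x : DCDAll) : DCDAll :=
  ⟨x.1, x.2.2.1, x.2.1, swapCirc (revBoth x.2.2.2)⟩

/-- The chord `j` of a double chord diagram joins the two core circles. -/
def JoinsCircles {n m₁ m₂ : ℕ} (G : DCD n m₁ m₂) (j : Fin n) : Prop :=
  ∃ (p : Fin m₁) (q : Fin m₂), G.c (Sum.inl p) = j ∧ G.c (Sum.inr q) = j


/-! ## Auxiliary machinery for Statement 10 -/

namespace Stmt10

open Relation Function

section Generic

variable {α β γ : Type}

lemma eqvGen_le {r s : α → α → Prop} (hs : Equivalence s) (h : ∀ x y, r x y → s x y) :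
    ∀ x y, EqvGen r x y → s x y := by
  intro x y hxy
  induction hxy with
  | rel a b hab => exact h _ _ hab
  | refl a => exact hs.refl a
  | symm a b _ ih => exact hs.symm ih
  | trans a b c _ _ ih1 ih2 => exact hs.trans ih1 ih2

lemma eqvGen_mono' {r s : α → α → Prop} (h : ∀ x y, r x y → EqvGen s x y) :
    ∀ x y, EqvGen r x y → EqvGen s x y :=
  eqvGen_le (EqvGen.is_equivalence s) h

lemma orbitCount_congr {r s : α → α → Prop}
    (h1 : ∀ x y, r x y → EqvGen s x y) (h2 : ∀ x y, s x y → EqvGen r x y) :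
    orbitCount r = orbitCount s := by
  unfold orbitCount
  have : EqvGen.setoid r = EqvGen.setoid s := by
    apply Setoid.ext; intro a b
    exact ⟨fun hh => eqvGen_mono' h1 a b hh, fun hh => eqvGen_mono' h2 a b hh⟩
  rw [this]

lemma orbitCount_comap (e : β ≃ α) (r : α → α → Prop) :
    orbitCount (fun x y => r (e x) (e y)) = orbitCount r := by
  unfold orbitCount
  apply Nat.card_congr
  refine Quotient.congr e ?_
  intro a b
  constructor
  · intro h
    refine eqvGen_le (s := fun x y => EqvGen r (e x) (e y)) ?_ ?_ _ _ h
    · exact ⟨fun x => EqvGen.refl _, fun h => h.symm _ _, fun h1 h2 => h1.trans _ _ _ h2⟩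
    · exact fun x y hxy => EqvGen.rel _ _ hxy
  · intro h
    have := eqvGen_le (r := r) (s := fun x y => EqvGen (fun a b => r (e a) (e b)) (e.symm x) (e.symm y)) ?_ ?_ _ _ h
    · show EqvGen _ a b
      simpa using this
    · exact ⟨fun x => EqvGen.refl _, fun h => h.symm _ _, fun h1 h2 => h1.trans _ _ _ h2⟩
    · intro x y hxy
      refine EqvGen.rel _ _ ?_
      simpa using hxy

/-- Add a single directed edge to a relation. -/
def withEdge (r : α → α → Prop) (x y : α) : α → α → Prop :=
  fun a b => r a b ∨ (a = x ∧ b = y)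

lemma orbitCount_withEdge_of_rel {r : α → α → Prop} {x y : α} (h : EqvGen r x y) :
    orbitCount (withEdge r x y) = orbitCount r :=
  orbitCount_congr
    (fun a b hab => hab.elim (EqvGen.rel a b) (fun hh => hh.1 ▸ hh.2 ▸ h))
    (fun a b hab => EqvGen.rel a b (Or.inl hab))

lemma nat_card_compl_eq {α : Type} [Finite α] (c : α) :
    Nat.card α = Nat.card {z : α // z ≠ c} + 1 := by
  classical
  rw [Nat.card_congr (Equiv.sumCompl (fun z : α => z = c)).symm, Nat.card_sum, Nat.add_comm]
  congr 1
  rw [Nat.card_eq_one_iff_unique]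
  exact ⟨⟨fun a b => Subtype.ext (a.2.trans b.2.symm)⟩, ⟨⟨_, rfl⟩⟩⟩

lemma orbitCount_withEdge_of_not_rel [Finite α] {r : α → α → Prop} {x y : α}
    (h : ¬ EqvGen r x y) :
    orbitCount r = orbitCount (withEdge r x y) + 1 := by
  classical
  let f : α → {z : Quotient (EqvGen.setoid r) // z ≠ Quotient.mk (EqvGen.setoid r) y} := fun a =>
    if hc : Quotient.mk (EqvGen.setoid r) a = Quotient.mk (EqvGen.setoid r) y
    then ⟨Quotient.mk (EqvGen.setoid r) x, fun hh => h (Quotient.exact hh)⟩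
    else ⟨Quotient.mk (EqvGen.setoid r) a, hc⟩
  have hf : ∀ a b, EqvGen (withEdge r x y) a b → f a = f b := by
    intro a b hab
    refine eqvGen_le (s := fun a b => f a = f b)
      ⟨fun _ => rfl, fun h => h.symm, fun h1 h2 => h1.trans h2⟩ ?_ a b hab
    intro u v huv
    rcases huv with huv | ⟨hu, hv⟩
    · have he : Quotient.mk (EqvGen.setoid r) u = Quotient.mk (EqvGen.setoid r) v := Quotient.sound (EqvGen.rel _ _ huv)
      simp only [f, he]
    · have hx : ¬ Quotient.mk (EqvGen.setoid r) x = Quotient.mk (EqvGen.setoid r) y := fun hh => h (Quotient.exact hh)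
      rw [hu, hv]
      simp only [f, dif_neg hx, dif_pos rfl]
  have hW : ∀ a b, EqvGen r a b → EqvGen (withEdge r x y) a b :=
    fun a b hab => eqvGen_mono' (fun u v huv => EqvGen.rel u v (Or.inl huv)) a b hab
  let key : Quotient (EqvGen.setoid (withEdge r x y)) ≃ {z : Quotient (EqvGen.setoid r) // z ≠ Quotient.mk (EqvGen.setoid r) y} :=
    { toFun := Quotient.lift f hf
      invFun := fun z => Quotient.lift (fun a => Quotient.mk (EqvGen.setoid (withEdge r x y)) a)
        (fun a b hab => Quotient.sound (hW a b (show EqvGen r a b from hab))) z.1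
      left_inv := by
        refine fun q => Quotient.inductionOn q (fun a => ?_)
        by_cases hc : Quotient.mk (EqvGen.setoid r) a = Quotient.mk (EqvGen.setoid r) y
        · have h1 : EqvGen (withEdge r x y) a y := hW a y (Quotient.exact hc)
          have h2 : EqvGen (withEdge r x y) x a :=
            (EqvGen.rel x y (Or.inr ⟨rfl, rfl⟩)).trans _ _ _ (h1.symm _ _)
          show Quotient.lift _ _ (f a).1 = _
          simp only [f, dif_pos hc]
          exact Quotient.sound h2
        · show Quotient.lift _ _ (f a).1 = _
          simp only [f, dif_neg hc]
          rfl
      right_inv := by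
        rintro ⟨z, hz⟩
        refine Quotient.inductionOn z (fun a ha => ?_) hz
        show f a = _
        simp only [f, dif_neg ha]
    }
  unfold orbitCount
  rw [Nat.card_congr key]
  exact nat_card_compl_eq _

end Generic


section Paths

variable {α β γ : Type}

/-- Right-unique (functional) relations. -/
def RU (r : α → α → Prop) : Prop := ∀ a b c, r a b → r a c → b = c

/-- Left-unique (injective) relations. -/
def LU (r : α → α → Prop) : Prop := ∀ a b c, r a c → r b c → a = b

lemma rtg_eq_of_no_succ {r : α → α → Prop} {a b : α} (h : ∀ c, ¬ r a c)
    (hab : ReflTransGen r a b) : b = a := by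
  rcases hab.cases_head with h1 | ⟨c, hc, _⟩
  · exact h1.symm
  · exact absurd hc (h c)

lemma rtg_eq_of_no_pred {r : α → α → Prop} {a b : α} (h : ∀ c, ¬ r c b)
    (hab : ReflTransGen r a b) : a = b := by
  have := hab.swap
  exact rtg_eq_of_no_succ (fun c hc => h c hc) this

lemma rtg_comparable {r : α → α → Prop} (hr : RU r) {a b c : α}
    (hab : ReflTransGen r a b) (hac : ReflTransGen r a c) :
    ReflTransGen r b c ∨ ReflTransGen r c b := by
  induction hab using Relation.ReflTransGen.head_induction_on with
  | refl => exact Or.inl hac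
  | head hstep _ ih =>
    rename_i a' a'' _
    rcases hac.cases_head with h1 | ⟨d, hd, hdc⟩
    · exact Or.inr (h1 ▸ (ReflTransGen.single hstep).trans (by assumption))
    · have : a'' = d := hr _ _ _ hstep hd
      exact ih (this ▸ hdc)

lemma rtg_comparable_rev {r : α → α → Prop} (hl : LU r) {a b c : α}
    (hab : ReflTransGen r a c) (hac : ReflTransGen r b c) :
    ReflTransGen r a b ∨ ReflTransGen r b a := by
  have h1 := hab.swap
  have h2 := hac.swap
  have := rtg_comparable (r := Function.swap r) (fun a b c hab hac => hl _ _ _ hab hac) h1 h2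
  rcases this with h | h
  · exact Or.inr h.swap
  · exact Or.inl h.swap

lemma rtg_le_eqvGen {r : α → α → Prop} {a b : α} (h : ReflTransGen r a b) :
    EqvGen r a b := by
  induction h with
  | refl => exact EqvGen.refl _
  | tail _ hstep ih => exact ih.trans _ _ _ (EqvGen.rel _ _ hstep)

lemma eqvGen_iff_common_reach {r : α → α → Prop} (hr : RU r) {a b : α} :
    EqvGen r a b ↔ ∃ c, ReflTransGen r a c ∧ ReflTransGen r b c := by
  constructor
  · intro h
    refine eqvGen_le (s := fun a b => ∃ c, ReflTransGen r a c ∧ ReflTransGen r b c)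
      ⟨fun x => ⟨x, ReflTransGen.refl, ReflTransGen.refl⟩,
       fun ⟨c, h1, h2⟩ => ⟨c, h2, h1⟩, ?_⟩
      (fun x y hxy => ⟨y, ReflTransGen.single hxy, ReflTransGen.refl⟩) a b h
    rintro x y z ⟨c₁, hx1, hy1⟩ ⟨c₂, hy2, hz2⟩
    rcases rtg_comparable hr hy1 hy2 with h | h
    · exact ⟨c₂, hx1.trans h, hz2⟩
    · exact ⟨c₁, hx1, hz2.trans h⟩
  · rintro ⟨c, h1, h2⟩
    exact (rtg_le_eqvGen h1).trans _ _ _ (rtg_le_eqvGen h2).symm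

lemma exists_sink [Finite α] {r : α → α → Prop} (hl : LU r) {a : α}
    (ha : ∀ b, ¬ r b a) : ∃ c, ReflTransGen r a c ∧ ∀ d, ¬ r c d := by
  classical
  by_contra hcon
  push_neg at hcon
  let V := {c // ReflTransGen r a c}
  let f : V → V := fun c =>
    ⟨(hcon c.1 c.2).choose, c.2.tail (hcon c.1 c.2).choose_spec⟩
  have hinj : Function.Injective f := by
    intro c d hcd
    have h1 : r c.1 (f c).1 := (hcon c.1 c.2).choose_spec
    have h2 : r d.1 (f d).1 := (hcon d.1 d.2).choose_spec
    exact Subtype.ext (hl _ _ _ h1 (hcd ▸ h2))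
  have hsurj : Function.Surjective f := Finite.surjective_of_injective hinj
  obtain ⟨c, hc⟩ := hsurj ⟨a, ReflTransGen.refl⟩
  have : r c.1 a := by
    have h1 : r c.1 (f c).1 := (hcon c.1 c.2).choose_spec
    rwa [hc] at h1
  exact ha _ this

/-- The key "two open strands" lemma: in a finite path/cycle graph whose only
sources are `A, C` and only sinks are `B, D`, the source `A` is connected to the
sink `D` iff the source `C` is connected to the sink `B`. -/
lemma cross_mp [Finite α] {r : α → α → Prop} (hr : RU r) (hl : LU r)
    {A B C D : α} (hAC : A ≠ C)
    (hA : ∀ b, ¬ r b A) (hC : ∀ b, ¬ r b C) (hD : ∀ d, ¬ r D d)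
    (hsink : ∀ x, (∀ d, ¬ r x d) → x = B ∨ x = D)
    (h : EqvGen r A D) : EqvGen r C B := by
  obtain ⟨z, hAz, hDz⟩ := (eqvGen_iff_common_reach hr).mp h
  have hzD : z = D := rtg_eq_of_no_succ hD hDz
  subst hzD
  obtain ⟨s, hCs, hs⟩ := exists_sink hl hC
  rcases hsink s hs with rfl | rfl
  · exact rtg_le_eqvGen hCs
  · exfalso
    rcases rtg_comparable_rev hl hAz hCs with h1 | h1
    · exact hAC (rtg_eq_of_no_pred hC h1)
    · exact hAC (rtg_eq_of_no_pred hA h1).symm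

lemma cross_iff [Finite α] {r : α → α → Prop} (hr : RU r) (hl : LU r)
    {A B C D : α} (hAC : A ≠ C)
    (hA : ∀ b, ¬ r b A) (hC : ∀ b, ¬ r b C) (hB : ∀ d, ¬ r B d) (hD : ∀ d, ¬ r D d)
    (hsink : ∀ x, (∀ d, ¬ r x d) → x = B ∨ x = D) :
    EqvGen r A D ↔ EqvGen r C B :=
  ⟨cross_mp hr hl hAC hA hC hD hsink,
   cross_mp hr hl (Ne.symm hAC) hC hA hB (fun x hx => (hsink x hx).symm)⟩

end Paths


section SumRel

variable {β γ : Type} {r₁ : β → β → Prop} {r₂ : γ → γ → Prop}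

lemma orbitCount_pullback_surj {α : Type} (q : β → α) (hq : Function.Surjective q)
    (s : α → α → Prop) :
    orbitCount s = orbitCount (fun x y => s (q x) (q y) ∨ q x = q y) := by
  classical
  unfold orbitCount
  apply Nat.card_congr
  symm
  refine
    { toFun := Quotient.lift (fun b => Quotient.mk (EqvGen.setoid s) (q b)) ?_
      invFun := fun z => Quotient.lift
        (fun c => Quotient.mk (EqvGen.setoid (fun x y => s (q x) (q y) ∨ q x = q y)) (hq c).choose)
        ?_ z
      left_inv := ?_
      right_inv := ?_ }
  · intro a b hab
    refine eqvGen_le (s := fun a b =>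
        Quotient.mk (EqvGen.setoid s) (q a) = Quotient.mk (EqvGen.setoid s) (q b))
      ⟨fun _ => rfl, fun h => h.symm, fun h1 h2 => h1.trans h2⟩ ?_ a b hab
    rintro u v (huv | huv)
    · exact Quotient.sound (EqvGen.rel _ _ huv)
    · rw [huv]
  · intro a b hab
    refine eqvGen_le (s := fun a b =>
        Quotient.mk (EqvGen.setoid (fun x y => s (q x) (q y) ∨ q x = q y)) (hq a).choose =
        Quotient.mk _ (hq b).choose)
      ⟨fun _ => rfl, fun h => h.symm, fun h1 h2 => h1.trans h2⟩ ?_ a b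
      (show EqvGen s a b from hab)
    intro u v huv
    refine Quotient.sound (EqvGen.rel _ _ (Or.inl ?_))
    rw [(hq u).choose_spec, (hq v).choose_spec]
    exact huv
  · refine fun z => Quotient.inductionOn z (fun b => ?_)
    refine Quotient.sound (EqvGen.rel _ _ (Or.inr ?_))
    exact (hq (q b)).choose_spec
  · refine fun z => Quotient.inductionOn z (fun c => ?_)
    simp only [Quotient.lift_mk]
    rw [(hq c).choose_spec]

lemma eqvGen_liftRel_isLeft {x y : β ⊕ γ} (h : EqvGen (Sum.LiftRel r₁ r₂) x y) :
    x.isLeft = y.isLeft := by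
  induction h with
  | rel a b hab => cases hab <;> rfl
  | refl => rfl
  | symm _ _ _ ih => exact ih.symm
  | trans _ _ _ _ _ ih1 ih2 => exact ih1.trans ih2

lemma eqvGen_inl_of {a b : β} (h : EqvGen r₁ a b) :
    EqvGen (Sum.LiftRel r₁ r₂) (.inl a) (.inl b) := by
  induction h with
  | rel a b hab => exact EqvGen.rel _ _ (Sum.LiftRel.inl hab)
  | refl => exact EqvGen.refl _
  | symm _ _ _ ih => exact ih.symm _ _
  | trans _ _ _ _ _ ih1 ih2 => exact ih1.trans _ _ _ ih2

lemma eqvGen_inr_of {a b : γ} (h : EqvGen r₂ a b) :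
    EqvGen (Sum.LiftRel r₁ r₂) (.inr a) (.inr b) := by
  induction h with
  | rel a b hab => exact EqvGen.rel _ _ (Sum.LiftRel.inr hab)
  | refl => exact EqvGen.refl _
  | symm _ _ _ ih => exact ih.symm _ _
  | trans _ _ _ _ _ ih1 ih2 => exact ih1.trans _ _ _ ih2

/-- The equivalence generated by a sum relation together with one crossing edge
`inl u → inr v`. -/
def crossRel (r₁ : β → β → Prop) (r₂ : γ → γ → Prop) (u : β) (v : γ) :
    β ⊕ γ → β ⊕ γ → Prop
  | .inl a, .inl b => EqvGen r₁ a b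
  | .inl a, .inr b => EqvGen r₁ a u ∧ EqvGen r₂ v b
  | .inr a, .inl b => EqvGen r₁ b u ∧ EqvGen r₂ v a
  | .inr a, .inr b => EqvGen r₂ a b

lemma eqvGen_withEdge_liftRel (u : β) (v : γ) (x y : β ⊕ γ) :
    EqvGen (withEdge (Sum.LiftRel r₁ r₂) (.inl u) (.inr v)) x y ↔ crossRel r₁ r₂ u v x y := by
  constructor
  · intro h
    refine eqvGen_le (s := crossRel r₁ r₂ u v) ⟨?_, ?_, ?_⟩ ?_ x y h
    · rintro (a | a)
      · exact EqvGen.refl _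
      · exact EqvGen.refl _
    · rintro (a | a) (b | b) hab
      · exact hab.symm _ _
      · exact hab
      · exact hab
      · exact hab.symm _ _
    · rintro (a | a) (b | b) (c | c) h1 h2
      · exact h1.trans _ _ _ h2
      · exact ⟨h1.trans _ _ _ h2.1, h2.2⟩
      · exact h1.1.trans _ _ _ (h2.1.symm _ _)
      · exact ⟨h1.1, h1.2.trans _ _ _ h2⟩
      · exact ⟨(h2.symm _ _).trans _ _ _ h1.1, h1.2⟩
      · exact (h1.2.symm _ _).trans _ _ _ h2.2
      · exact ⟨h2.1, h2.2.trans _ _ _ (h1.symm _ _)⟩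
      · exact h1.trans _ _ _ h2
    · rintro (a | a) (b | b) (hab | ⟨h1, h2⟩)
      · cases hab with | inl hab => exact EqvGen.rel _ _ hab
      · simp at h2
      · cases hab
      · obtain rfl : a = u := by simpa using h1
        obtain rfl : b = v := by simpa using h2
        exact ⟨EqvGen.refl _, EqvGen.refl _⟩
      · cases hab
      · simp at h1
      · cases hab with | inr hab => exact EqvGen.rel _ _ hab
      · simp at h1
  · intro h
    have hinc : ∀ p q : β ⊕ γ, Sum.LiftRel r₁ r₂ p q →
        EqvGen (withEdge (Sum.LiftRel r₁ r₂) (Sum.inl u) (Sum.inr v)) p q :=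
      fun p q hpq => EqvGen.rel _ _ (Or.inl hpq)
    have hedge : EqvGen (withEdge (Sum.LiftRel r₁ r₂) (Sum.inl u) (Sum.inr v))
        (Sum.inl u) (Sum.inr v) := EqvGen.rel _ _ (Or.inr ⟨rfl, rfl⟩)
    have hl : ∀ a b : β, EqvGen r₁ a b →
        EqvGen (withEdge (Sum.LiftRel r₁ r₂) (Sum.inl u) (Sum.inr v)) (.inl a) (.inl b) :=
      fun a b hab => eqvGen_mono' (fun p q h => hinc p q h) _ _ (eqvGen_inl_of hab)
    have hr : ∀ a b : γ, EqvGen r₂ a b →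
        EqvGen (withEdge (Sum.LiftRel r₁ r₂) (Sum.inl u) (Sum.inr v)) (.inr a) (.inr b) :=
      fun a b hab => eqvGen_mono' (fun p q h => hinc p q h) _ _ (eqvGen_inr_of hab)
    match x, y, h with
    | .inl a, .inl b, h => exact hl a b h
    | .inl a, .inr b, ⟨h1, h2⟩ => exact ((hl a u h1).trans _ _ _ hedge).trans _ _ _ (hr v b h2)
    | .inr a, .inl b, ⟨h1, h2⟩ =>
      exact (((hl b u h1).trans _ _ _ hedge).trans _ _ _ (hr v a h2)).symm _ _
    | .inr a, .inr b, h => exact hr a b h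

end SumRel


section Tangle

/-- The surgery-traversal relation of a double linear diagram, depending only on
the "other endpoint" map `o`. -/
def relOf {m₁ m₂ : ℕ} (o : Fin m₁ ⊕ Fin m₂ → Fin m₁ ⊕ Fin m₂) :
    (Fin (m₁ + 1) ⊕ Fin (m₂ + 1)) → (Fin (m₁ + 1) ⊕ Fin (m₂ + 1)) → Prop :=
  fun s t => ∃ p, s = segBefore p ∧ t = segAfter (o p)

lemma betaDLD_eq_relOf {n m₁ m₂ : ℕ} (G : DLD n m₁ m₂) :
    betaDLD G = orbitCount (relOf (otherPt G.c)) := rfl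

lemma segBefore_inj {m₁ m₂ : ℕ} : Function.Injective (segBefore (m₁ := m₁) (m₂ := m₂)) := by
  rintro (a | a) (b | b) h <;> simp only [segBefore, Sum.map_inl, Sum.map_inr,
    Sum.inl.injEq, Sum.inr.injEq] at h <;> first
    | rfl
    | (exact congrArg _ (Fin.castSucc_injective _ h))
    | cases h

lemma segAfter_inj {m₁ m₂ : ℕ} : Function.Injective (segAfter (m₁ := m₁) (m₂ := m₂)) := by
  rintro (a | a) (b | b) h <;> simp only [segAfter, Sum.map_inl, Sum.map_inr,
    Sum.inl.injEq, Sum.inr.injEq] at h <;> first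
    | rfl
    | (exact congrArg _ (Fin.succ_injective _ h))
    | cases h

lemma relOf_RU {m₁ m₂ : ℕ} {o : Fin m₁ ⊕ Fin m₂ → Fin m₁ ⊕ Fin m₂} : RU (relOf o) := by
  rintro s t t' ⟨p, hp, ht⟩ ⟨p', hp', ht'⟩
  obtain rfl : p = p' := segBefore_inj (hp.symm.trans hp')
  exact ht.trans ht'.symm

lemma relOf_LU {m₁ m₂ : ℕ} {o : Fin m₁ ⊕ Fin m₂ → Fin m₁ ⊕ Fin m₂}
    (ho : Function.Injective o) : LU (relOf o) := by
  rintro s s' t ⟨p, hp, ht⟩ ⟨p', hp', ht'⟩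
  obtain rfl : p = p' := ho (segAfter_inj (ht.symm.trans ht'))
  exact hp.trans hp'.symm

lemma relOf_no_pred_inl {m₁ m₂ : ℕ} {o : Fin m₁ ⊕ Fin m₂ → Fin m₁ ⊕ Fin m₂} :
    ∀ b, ¬ relOf o b (Sum.inl (0 : Fin (m₁ + 1))) := by
  rintro b ⟨p, _, ht⟩
  rcases hop : o p with j | j <;> rw [hop] at ht
  · exact Fin.succ_ne_zero j (Sum.inl.inj ht).symm
  · exact Sum.inl_ne_inr ht

lemma relOf_no_pred_inr {m₁ m₂ : ℕ} {o : Fin m₁ ⊕ Fin m₂ → Fin m₁ ⊕ Fin m₂} :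
    ∀ b, ¬ relOf o b (Sum.inr (0 : Fin (m₂ + 1))) := by
  rintro b ⟨p, _, ht⟩
  rcases hop : o p with j | j <;> rw [hop] at ht
  · exact Sum.inr_ne_inl ht
  · exact Fin.succ_ne_zero j (Sum.inr.inj ht).symm

lemma relOf_no_succ_inl {m₁ m₂ : ℕ} {o : Fin m₁ ⊕ Fin m₂ → Fin m₁ ⊕ Fin m₂} :
    ∀ d, ¬ relOf o (Sum.inl (Fin.last m₁)) d := by
  rintro d ⟨p, hp, _⟩
  rcases p with j | j
  · exact (Fin.castSucc_lt_last j).ne' (Sum.inl.inj hp)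
  · exact Sum.inl_ne_inr hp

lemma relOf_no_succ_inr {m₁ m₂ : ℕ} {o : Fin m₁ ⊕ Fin m₂ → Fin m₁ ⊕ Fin m₂} :
    ∀ d, ¬ relOf o (Sum.inr (Fin.last m₂)) d := by
  rintro d ⟨p, hp, _⟩
  rcases p with j | j
  · exact Sum.inr_ne_inl hp
  · exact (Fin.castSucc_lt_last j).ne' (Sum.inr.inj hp)

lemma relOf_sink {m₁ m₂ : ℕ} {o : Fin m₁ ⊕ Fin m₂ → Fin m₁ ⊕ Fin m₂} :
    ∀ x, (∀ d, ¬ relOf o x d) → x = Sum.inl (Fin.last m₁) ∨ x = Sum.inr (Fin.last m₂) := by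
  rintro (j | j) hx
  · by_cases hj : j = Fin.last m₁
    · exact Or.inl (by rw [hj])
    · obtain ⟨j', rfl⟩ := Fin.exists_castSucc_eq.mpr hj
      exact absurd ⟨Sum.inl j', rfl, rfl⟩ (hx (segAfter (o (Sum.inl j'))))
  · by_cases hj : j = Fin.last m₂
    · exact Or.inr (by rw [hj])
    · obtain ⟨j', rfl⟩ := Fin.exists_castSucc_eq.mpr hj
      exact absurd ⟨Sum.inr j', rfl, rfl⟩ (hx (segAfter (o (Sum.inr j'))))

/-- In any double linear diagram, the left end of line 1 is connected (after
surgery) to the right end of line 2 iff the left end of line 2 is connected to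
the right end of line 1. -/
lemma relOf_cross_iff {m₁ m₂ : ℕ} {o : Fin m₁ ⊕ Fin m₂ → Fin m₁ ⊕ Fin m₂}
    (ho : Function.Bijective o) :
    EqvGen (relOf o) (Sum.inl 0) (Sum.inr (Fin.last m₂)) ↔
    EqvGen (relOf o) (Sum.inr 0) (Sum.inl (Fin.last m₁)) :=
  cross_iff relOf_RU (relOf_LU ho.injective) (by simp)
    relOf_no_pred_inl relOf_no_pred_inr relOf_no_succ_inl relOf_no_succ_inr relOf_sink

end Tangle


section Glue

variable {a₁ a₂ b₁ b₂ : ℕ}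

/-- Reshuffling of four summands used to concatenate two double linear diagrams. -/
def swizzle (A B C D : Type) : (A ⊕ B) ⊕ (C ⊕ D) ≃ (A ⊕ C) ⊕ (D ⊕ B) where
  toFun x := match x with
    | .inl (.inl a) => .inl (.inl a)
    | .inl (.inr b) => .inr (.inr b)
    | .inr (.inl c) => .inl (.inr c)
    | .inr (.inr d) => .inr (.inl d)
  invFun x := match x with
    | .inl (.inl a) => .inl (.inl a)
    | .inl (.inr c) => .inr (.inl c)
    | .inr (.inl d) => .inr (.inr d)
    | .inr (.inr b) => .inl (.inr b)
  left_inv := by rintro ((a | b) | (c | d)) <;> rfl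
  right_inv := by rintro ((a | c) | (d | b)) <;> rfl

/-- Identification of the points of two tangles with the points of their
(crossed) concatenation. -/
def iota (a₁ a₂ b₁ b₂ : ℕ) :
    (Fin a₁ ⊕ Fin a₂) ⊕ (Fin b₁ ⊕ Fin b₂) ≃ Fin (a₁ + b₁) ⊕ Fin (b₂ + a₂) :=
  (swizzle _ _ _ _).trans (Equiv.sumCongr finSumFinEquiv finSumFinEquiv)

@[simp] lemma iota_ll (i : Fin a₁) :
    iota a₁ a₂ b₁ b₂ (.inl (.inl i)) = .inl (Fin.castAdd b₁ i) := rfl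
@[simp] lemma iota_lr (i : Fin a₂) :
    iota a₁ a₂ b₁ b₂ (.inl (.inr i)) = .inr (Fin.natAdd b₂ i) := rfl
@[simp] lemma iota_rl (i : Fin b₁) :
    iota a₁ a₂ b₁ b₂ (.inr (.inl i)) = .inl (Fin.natAdd a₁ i) := rfl
@[simp] lemma iota_rr (i : Fin b₂) :
    iota a₁ a₂ b₁ b₂ (.inr (.inr i)) = .inr (Fin.castAdd a₂ i) := rfl

/-- The gluing surjection from the segments of the two tangles to the segments
of their concatenation. -/
def gq (a₁ a₂ b₁ b₂ : ℕ) :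
    (Fin (a₁ + 1) ⊕ Fin (a₂ + 1)) ⊕ (Fin (b₁ + 1) ⊕ Fin (b₂ + 1)) →
    Fin (a₁ + b₁ + 1) ⊕ Fin (b₂ + a₂ + 1)
  | .inl (.inl j) => .inl ⟨j.1, by have := j.2; omega⟩
  | .inl (.inr j) => .inr ⟨b₂ + j.1, by have := j.2; omega⟩
  | .inr (.inl j) => .inl ⟨a₁ + j.1, by have := j.2; omega⟩
  | .inr (.inr j) => .inr ⟨j.1, by have := j.2; omega⟩

lemma gq_surj : Function.Surjective (gq a₁ a₂ b₁ b₂) := by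
  rintro (⟨k, hk⟩ | ⟨k, hk⟩)
  · by_cases h : k ≤ a₁
    · exact ⟨.inl (.inl ⟨k, by omega⟩), rfl⟩
    · refine ⟨.inr (.inl ⟨k - a₁, by omega⟩), ?_⟩
      simp only [gq, Sum.inl.injEq, Fin.mk.injEq]
      omega
  · by_cases h : k ≤ b₂
    · exact ⟨.inr (.inr ⟨k, by omega⟩), rfl⟩
    · refine ⟨.inl (.inr ⟨k - b₂, by omega⟩), ?_⟩
      simp only [gq, Sum.inr.injEq, Fin.mk.injEq]
      omega

lemma gq_before_l (p : Fin a₁ ⊕ Fin a₂) :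
    gq a₁ a₂ b₁ b₂ (.inl (segBefore p)) = segBefore (iota a₁ a₂ b₁ b₂ (.inl p)) := by
  rcases p with i | i <;>
    simp [gq, segBefore, Fin.ext_iff]

lemma gq_after_l (p : Fin a₁ ⊕ Fin a₂) :
    gq a₁ a₂ b₁ b₂ (.inl (segAfter p)) = segAfter (iota a₁ a₂ b₁ b₂ (.inl p)) := by
  rcases p with i | i <;>
    simp [gq, segAfter, Fin.ext_iff, Nat.add_assoc]

lemma gq_before_r (p : Fin b₁ ⊕ Fin b₂) :
    gq a₁ a₂ b₁ b₂ (.inr (segBefore p)) = segBefore (iota a₁ a₂ b₁ b₂ (.inr p)) := by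
  rcases p with i | i <;>
    simp [gq, segBefore, Fin.ext_iff]

lemma gq_after_r (p : Fin b₁ ⊕ Fin b₂) :
    gq a₁ a₂ b₁ b₂ (.inr (segAfter p)) = segAfter (iota a₁ a₂ b₁ b₂ (.inr p)) := by
  rcases p with i | i <;>
    simp [gq, segAfter, Fin.ext_iff, Nat.add_assoc]

lemma gq_fiber {R : ((Fin (a₁ + 1) ⊕ Fin (a₂ + 1)) ⊕ (Fin (b₁ + 1) ⊕ Fin (b₂ + 1))) →
      ((Fin (a₁ + 1) ⊕ Fin (a₂ + 1)) ⊕ (Fin (b₁ + 1) ⊕ Fin (b₂ + 1))) → Prop}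
    {x y : (Fin (a₁ + 1) ⊕ Fin (a₂ + 1)) ⊕ (Fin (b₁ + 1) ⊕ Fin (b₂ + 1))}
    (h : gq a₁ a₂ b₁ b₂ x = gq a₁ a₂ b₁ b₂ y) :
    EqvGen (withEdge (withEdge R (.inl (.inl (Fin.last a₁))) (.inr (.inl 0)))
      (.inr (.inr (Fin.last b₂))) (.inl (.inr 0))) x y := by
  rcases x with (j | j) | (j | j) <;> rcases y with (j' | j') | (j' | j') <;>
    simp only [gq, Sum.inl.injEq, Sum.inr.injEq, Fin.mk.injEq, reduceCtorEq] at h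
  · obtain rfl : j = j' := Fin.ext h
    exact EqvGen.refl _
  · -- inl inl vs inr inl : the first glue point
    have hj := j.2; have hj' := j'.2
    obtain rfl : j = Fin.last a₁ := Fin.ext (by rw [Fin.val_last]; omega)
    obtain rfl : j' = 0 := Fin.ext (by rw [Fin.val_zero]; omega)
    exact EqvGen.rel _ _ (Or.inl (Or.inr ⟨rfl, rfl⟩))
  · obtain rfl : j = j' := Fin.ext (by omega)
    exact EqvGen.refl _
  · -- inl inr vs inr inr : the second glue point
    have hj := j.2; have hj' := j'.2
    obtain rfl : j = 0 := Fin.ext (by rw [Fin.val_zero]; omega)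
    obtain rfl : j' = Fin.last b₂ := Fin.ext (by rw [Fin.val_last]; omega)
    exact (EqvGen.rel (Sum.inr (Sum.inr (Fin.last b₂))) (Sum.inl (Sum.inr 0))
      (Or.inr ⟨rfl, rfl⟩)).symm _ _
  · have hj := j.2; have hj' := j'.2
    obtain rfl : j = 0 := Fin.ext (by rw [Fin.val_zero]; omega)
    obtain rfl : j' = Fin.last a₁ := Fin.ext (by rw [Fin.val_last]; omega)
    exact (EqvGen.rel (Sum.inl (Sum.inl (Fin.last a₁))) (Sum.inr (Sum.inl 0))
      (Or.inl (Or.inr ⟨rfl, rfl⟩))).symm _ _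
  · obtain rfl : j = j' := Fin.ext (by omega)
    exact EqvGen.refl _
  · have hj := j.2; have hj' := j'.2
    obtain rfl : j = Fin.last b₂ := Fin.ext (by rw [Fin.val_last]; omega)
    obtain rfl : j' = 0 := Fin.ext (by rw [Fin.val_zero]; omega)
    exact EqvGen.rel _ _ (Or.inr ⟨rfl, rfl⟩)
  · obtain rfl : j = j' := Fin.ext h
    exact EqvGen.refl _

-- The gluing formula: the number of components of the concatenation of two
-- tangles, in terms of the two tangles.
open Classical in
lemma glue_count (o₁ : Fin a₁ ⊕ Fin a₂ → Fin a₁ ⊕ Fin a₂)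
    (o₂ : Fin b₁ ⊕ Fin b₂ → Fin b₁ ⊕ Fin b₂) :
    orbitCount (relOf (⇑(iota a₁ a₂ b₁ b₂) ∘ Sum.map o₁ o₂ ∘ ⇑(iota a₁ a₂ b₁ b₂).symm)) +
      (if (EqvGen (relOf o₁) (Sum.inr 0) (Sum.inl (Fin.last a₁)) ∧
           EqvGen (relOf o₂) (Sum.inl 0) (Sum.inr (Fin.last b₂))) then 1 else 2) =
    orbitCount (Sum.LiftRel (relOf o₁) (relOf o₂)) := by
  classical
  set O : Fin (a₁ + b₁) ⊕ Fin (b₂ + a₂) → Fin (a₁ + b₁) ⊕ Fin (b₂ + a₂) :=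
    ⇑(iota a₁ a₂ b₁ b₂) ∘ Sum.map o₁ o₂ ∘ ⇑(iota a₁ a₂ b₁ b₂).symm with hO
  have hOι : ∀ X, O (iota a₁ a₂ b₁ b₂ X) = iota a₁ a₂ b₁ b₂ (Sum.map o₁ o₂ X) := by
    intro X; simp [hO]
  set W1 := withEdge (Sum.LiftRel (relOf o₁) (relOf o₂))
    (.inl (.inl (Fin.last a₁))) (.inr (.inl 0)) with hW1
  set W2 := withEdge W1 (.inr (.inr (Fin.last b₂))) (.inl (.inr 0)) with hW2
  have hstep : orbitCount (relOf O) = orbitCount W2 := by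
    rw [orbitCount_pullback_surj (gq a₁ a₂ b₁ b₂) gq_surj (relOf O)]
    apply orbitCount_congr
    · rintro x y (hR | heq)
      · obtain ⟨P, hs, ht⟩ := hR
        obtain ⟨X, rfl⟩ : ∃ X, P = iota a₁ a₂ b₁ b₂ X :=
          ⟨(iota a₁ a₂ b₁ b₂).symm P, ((iota a₁ a₂ b₁ b₂).apply_symm_apply P).symm⟩
        rcases X with p | p
        · rw [hOι, Sum.map_inl, ← gq_after_l] at ht
          rw [← gq_before_l] at hs
          refine (gq_fiber (R := Sum.LiftRel (relOf o₁) (relOf o₂)) hs).trans _ _ _ ?_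
          refine EqvGen.trans _ _ _ ?_ ((gq_fiber ht).symm _ _)
          exact EqvGen.rel _ _ (Or.inl (Or.inl (Sum.LiftRel.inl ⟨p, rfl, rfl⟩)))
        · rw [hOι, Sum.map_inr, ← gq_after_r] at ht
          rw [← gq_before_r] at hs
          refine (gq_fiber (R := Sum.LiftRel (relOf o₁) (relOf o₂)) hs).trans _ _ _ ?_
          refine EqvGen.trans _ _ _ ?_ ((gq_fiber ht).symm _ _)
          exact EqvGen.rel _ _ (Or.inl (Or.inl (Sum.LiftRel.inr ⟨p, rfl, rfl⟩)))
      · exact gq_fiber heq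
    · rintro x y ((hb | ⟨rfl, rfl⟩) | ⟨rfl, rfl⟩)
      · cases hb with
        | inl hr =>
          obtain ⟨p, rfl, rfl⟩ := hr
          refine EqvGen.rel _ _ (Or.inl ⟨iota a₁ a₂ b₁ b₂ (.inl p), ?_, ?_⟩)
          · exact gq_before_l p
          · rw [hOι, Sum.map_inl]; exact gq_after_l (o₁ p)
        | inr hr =>
          obtain ⟨p, rfl, rfl⟩ := hr
          refine EqvGen.rel _ _ (Or.inl ⟨iota a₁ a₂ b₁ b₂ (.inr p), ?_, ?_⟩)
          · exact gq_before_r p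
          · rw [hOι, Sum.map_inr]; exact gq_after_r (o₂ p)
      · refine EqvGen.rel _ _ (Or.inr ?_)
        simp only [gq, Sum.inl.injEq, Fin.mk.injEq, Fin.val_last, Fin.val_zero]
        omega
      · refine EqvGen.rel _ _ (Or.inr ?_)
        simp only [gq, Sum.inr.injEq, Fin.mk.injEq, Fin.val_last, Fin.val_zero]
        omega
  have h1 : ¬ EqvGen (Sum.LiftRel (relOf o₁) (relOf o₂))
      (.inl (.inl (Fin.last a₁))) (.inr (.inl 0)) := by
    intro h
    simpa using eqvGen_liftRel_isLeft h
  have hb : orbitCount (Sum.LiftRel (relOf o₁) (relOf o₂)) = orbitCount W1 + 1 :=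
    orbitCount_withEdge_of_not_rel h1
  have hchar : EqvGen W1 (.inr (.inr (Fin.last b₂))) (.inl (.inr 0)) ↔
      (EqvGen (relOf o₁) (Sum.inr 0) (Sum.inl (Fin.last a₁)) ∧
       EqvGen (relOf o₂) (Sum.inl 0) (Sum.inr (Fin.last b₂))) := by
    rw [hW1]
    exact eqvGen_withEdge_liftRel (Sum.inl (Fin.last a₁)) (Sum.inl 0) _ _
  by_cases hc : EqvGen (relOf o₁) (Sum.inr 0) (Sum.inl (Fin.last a₁)) ∧
      EqvGen (relOf o₂) (Sum.inl 0) (Sum.inr (Fin.last b₂))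
  · rw [if_pos hc, hstep, hW2, orbitCount_withEdge_of_rel (hchar.mpr hc), hb]
  · have h2 : orbitCount W1 = orbitCount W2 + 1 := by
      rw [hW2]
      exact orbitCount_withEdge_of_not_rel (fun h => hc (hchar.mp h))
    rw [if_neg hc, hstep, hb, h2]

/-- The master combinatorial lemma: the component count of the concatenation of
two tangles is symmetric in the two tangles. -/
lemma master {a₁ a₂ b₁ b₂ : ℕ}
    (o₁ : Fin a₁ ⊕ Fin a₂ → Fin a₁ ⊕ Fin a₂) (o₂ : Fin b₁ ⊕ Fin b₂ → Fin b₁ ⊕ Fin b₂)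
    (h₁ : Function.Bijective o₁) (h₂ : Function.Bijective o₂) :
    orbitCount (relOf (⇑(iota a₁ a₂ b₁ b₂) ∘ Sum.map o₁ o₂ ∘ ⇑(iota a₁ a₂ b₁ b₂).symm)) =
    orbitCount (relOf (⇑(iota b₁ b₂ a₁ a₂) ∘ Sum.map o₂ o₁ ∘ ⇑(iota b₁ b₂ a₁ a₂).symm)) := by
  have g1 := glue_count o₁ o₂
  have g2 := glue_count o₂ o₁
  have hbase : orbitCount (Sum.LiftRel (relOf o₂) (relOf o₁)) =
      orbitCount (Sum.LiftRel (relOf o₁) (relOf o₂)) := by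
    rw [← orbitCount_comap (Equiv.sumComm (Fin (a₁ + 1) ⊕ Fin (a₂ + 1))
      (Fin (b₁ + 1) ⊕ Fin (b₂ + 1))) (Sum.LiftRel (relOf o₂) (relOf o₁))]
    apply orbitCount_congr
    · rintro (x | x) (y | y) h <;>
        simp only [Equiv.sumComm_apply, Sum.swap_inl, Sum.swap_inr] at h
      · cases h with | inr h => exact EqvGen.rel _ _ (Sum.LiftRel.inl h)
      · cases h
      · cases h
      · cases h with | inl h => exact EqvGen.rel _ _ (Sum.LiftRel.inr h)
    · intro x y h
      cases h with
      | inl h =>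
        refine EqvGen.rel _ _ ?_
        simp only [Equiv.sumComm_apply, Sum.swap_inl]
        exact Sum.LiftRel.inr h
      | inr h =>
        refine EqvGen.rel _ _ ?_
        simp only [Equiv.sumComm_apply, Sum.swap_inr]
        exact Sum.LiftRel.inl h
  have hcond : (EqvGen (relOf o₁) (Sum.inr 0) (Sum.inl (Fin.last a₁)) ∧
      EqvGen (relOf o₂) (Sum.inl 0) (Sum.inr (Fin.last b₂))) ↔
      (EqvGen (relOf o₂) (Sum.inr 0) (Sum.inl (Fin.last b₁)) ∧
      EqvGen (relOf o₁) (Sum.inl 0) (Sum.inr (Fin.last a₂))) := by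
    rw [relOf_cross_iff h₂, relOf_cross_iff h₁]
    exact and_comm
  rw [hbase] at g2
  by_cases hc : EqvGen (relOf o₁) (Sum.inr 0) (Sum.inl (Fin.last a₁)) ∧
      EqvGen (relOf o₂) (Sum.inl 0) (Sum.inr (Fin.last b₂))
  · rw [if_pos hc] at g1
    rw [if_pos (hcond.mp hc)] at g2
    omega
  · rw [if_neg hc] at g1
    rw [if_neg (fun h => hc (hcond.mpr h))] at g2
    omega

end Glue


section OtherPtLemmas

variable {α β : Type} [Fintype α] [DecidableEq α] {n : ℕ}

lemma otherPt_spec {c : α → Fin n} (h2 : ∀ j, Fintype.card {q // c q = j} = 2) (p : α) :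
    c (otherPt c p) = c p ∧ otherPt c p ≠ p := by
  classical
  have hS : (Finset.univ.filter fun q => c q = c p).card = 2 := by
    rw [← Fintype.card_subtype]
    exact h2 (c p)
  have hmemp : p ∈ Finset.univ.filter fun q => c q = c p := by simp
  have hF : (Finset.univ.filter fun q => c q = c p ∧ q ≠ p) =
      (Finset.univ.filter fun q => c q = c p).erase p := by
    ext q
    simp only [Finset.mem_filter, Finset.mem_univ, true_and, Finset.mem_erase]
    tauto
  have hcard : (Finset.univ.filter fun q => c q = c p ∧ q ≠ p).card = 1 := by
    rw [hF, Finset.card_erase_of_mem hmemp, hS]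
  have hne : (Finset.univ.filter fun q => c q = c p ∧ q ≠ p).Nonempty :=
    Finset.card_pos.mp (by rw [hcard]; norm_num)
  have hmem : otherPt c p ∈ Finset.univ.filter fun q => c q = c p ∧ q ≠ p := by
    rw [otherPt, dif_pos hne]
    exact hne.choose_spec
  simp only [Finset.mem_filter, Finset.mem_univ, true_and] at hmem
  exact hmem

lemma eq_otherPt {c : α → Fin n} (h2 : ∀ j, Fintype.card {q // c q = j} = 2) {p q : α}
    (hq : c q = c p) (hne : q ≠ p) : q = otherPt c p := by
  classical
  have hS : (Finset.univ.filter fun q => c q = c p).card = 2 := by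
    rw [← Fintype.card_subtype]; exact h2 (c p)
  have hmemp : p ∈ Finset.univ.filter fun q => c q = c p := by simp
  have hF : (Finset.univ.filter fun q => c q = c p ∧ q ≠ p) =
      (Finset.univ.filter fun q => c q = c p).erase p := by
    ext q
    simp only [Finset.mem_filter, Finset.mem_univ, true_and, Finset.mem_erase]
    tauto
  have hcard : (Finset.univ.filter fun q => c q = c p ∧ q ≠ p).card = 1 := by
    rw [hF, Finset.card_erase_of_mem hmemp, hS]
  obtain ⟨x, hx⟩ := Finset.card_eq_one.mp hcard
  have hq' : q ∈ Finset.univ.filter fun q => c q = c p ∧ q ≠ p := by simp [hq, hne]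
  have hne' : (Finset.univ.filter fun q => c q = c p ∧ q ≠ p).Nonempty := ⟨q, hq'⟩
  have ho : otherPt c p ∈ Finset.univ.filter fun q => c q = c p ∧ q ≠ p := by
    rw [otherPt, dif_pos hne']
    exact hne'.choose_spec
  rw [hx, Finset.mem_singleton] at hq' ho
  rw [hq', ho]

lemma otherPt_involutive {c : α → Fin n} (h2 : ∀ j, Fintype.card {q // c q = j} = 2) :
    Function.Involutive (otherPt c) := by
  intro p
  exact (eq_otherPt h2 (otherPt_spec h2 p).1.symm
    (fun h => (otherPt_spec h2 p).2 h.symm)).symm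

lemma otherPt_bijective {c : α → Fin n} (h2 : ∀ j, Fintype.card {q // c q = j} = 2) :
    Function.Bijective (otherPt c) :=
  (otherPt_involutive h2).bijective

lemma otherPt_comp_equiv [Fintype β] [DecidableEq β] (e : β ≃ α) {c : α → Fin n}
    (h2 : ∀ j, Fintype.card {q // c q = j} = 2) (p : β) :
    otherPt (c ∘ ⇑e) p = e.symm (otherPt c (e p)) := by
  have h2' : ∀ j, Fintype.card {q // (c ∘ ⇑e) q = j} = 2 := fun j =>
    (Fintype.card_congr (e.subtypeEquiv fun _ => Iff.rfl)).trans (h2 j)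
  refine (eq_otherPt h2' ?_ ?_).symm
  · show c (e (e.symm _)) = c (e p)
    rw [e.apply_symm_apply]
    exact (otherPt_spec h2 (e p)).1
  · intro h
    have := congrArg e h
    rw [e.apply_symm_apply] at this
    exact (otherPt_spec h2 (e p)).2 this

end OtherPtLemmas

section Split

lemma orderEmb_split {m k₁ k₂ : ℕ} (s : Finset (Fin m)) (s₁ : Finset (Fin k₁))
    (s₂ : Finset (Fin k₂)) (f₁ : Fin k₁ → Fin m) (f₂ : Fin k₂ → Fin m)
    (hf₁ : StrictMono f₁) (hf₂ : StrictMono f₂) (hlt : ∀ x y, f₁ x < f₂ y)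
    (hs : s = s₁.image f₁ ∪ s₂.image f₂)
    {c c₁ c₂ : ℕ} (hc : c = c₁ + c₂) (h : s.card = c) (h₁ : s₁.card = c₁) (h₂ : s₂.card = c₂)
    (k : Fin c) :
    s.orderEmbOfFin h k =
      if hk : k.1 < c₁ then f₁ (s₁.orderEmbOfFin h₁ ⟨k.1, hk⟩)
      else f₂ (s₂.orderEmbOfFin h₂ ⟨k.1 - c₁, by have := k.2; omega⟩) := by
  classical
  subst hc
  subst hs
  have key := Finset.orderEmbOfFin_unique h
    (f := fun k : Fin (c₁ + c₂) =>
      if hk : k.1 < c₁ then f₁ (s₁.orderEmbOfFin h₁ ⟨k.1, hk⟩)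
      else f₂ (s₂.orderEmbOfFin h₂ ⟨k.1 - c₁, by have := k.2; omega⟩))
    ?_ ?_
  · exact (congrFun key k).symm
  · intro x
    by_cases hx : x.1 < c₁
    · rw [dif_pos hx]
      exact Finset.mem_union_left _
        (Finset.mem_image_of_mem f₁ (Finset.orderEmbOfFin_mem s₁ h₁ _))
    · rw [dif_neg hx]
      exact Finset.mem_union_right _
        (Finset.mem_image_of_mem f₂ (Finset.orderEmbOfFin_mem s₂ h₂ _))
  · intro x y hxy
    dsimp only
    by_cases hx : x.1 < c₁ <;> by_cases hy : y.1 < c₁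
    · rw [dif_pos hx, dif_pos hy]
      exact hf₁ ((s₁.orderEmbOfFin h₁).strictMono (by simpa using hxy))
    · rw [dif_pos hx, dif_neg hy]
      exact hlt _ _
    · exact absurd hxy (by simp only [not_lt] at hy ⊢; exact le_of_lt (by omega))
    · rw [dif_neg hx, dif_neg hy]
      refine hf₂ ((s₂.orderEmbOfFin h₂).strictMono ?_)
      have hx' := Fin.lt_def.mp hxy
      simp only [Fin.mk_lt_mk, Fin.lt_def]
      omega

end Split


section App

variable {n₁ n₂ : ℕ}

/-- Embedding of the points of `G₁` into the points of `G₁ # G₂`. -/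
def emb1 (n₁ n₂ : ℕ) (p : Fin (2 * n₁)) : Fin (2 * (n₁ + n₂)) :=
  ⟨p.1, by have := p.2; omega⟩

/-- Embedding of the points of `G₂` into the points of `G₁ # G₂`. -/
def emb2 (n₁ n₂ : ℕ) (p : Fin (2 * n₂)) : Fin (2 * (n₁ + n₂)) :=
  ⟨2 * n₁ + p.1, by have := p.2; omega⟩

lemma emb1_strictMono : StrictMono (emb1 n₁ n₂) := fun _ _ h => h

lemma emb2_strictMono : StrictMono (emb2 n₁ n₂) := fun p q h =>
  show 2 * n₁ + p.1 < 2 * n₁ + q.1 from Nat.add_lt_add_left h _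

lemma emb1_lt_emb2 (p : Fin (2 * n₁)) (q : Fin (2 * n₂)) :
    emb1 n₁ n₂ p < emb2 n₁ n₂ q := by
  have := p.2
  show p.1 < 2 * n₁ + q.1
  omega

lemma concatEquiv_emb1 (p : Fin (2 * n₁)) :
    concatEquiv n₁ n₂ (emb1 n₁ n₂ p) = Sum.inl p := by
  have h : (finCongr (by ring : 2 * (n₁ + n₂) = 2 * n₁ + 2 * n₂)) (emb1 n₁ n₂ p) =
      Fin.castAdd (2 * n₂) p := by
    apply Fin.ext
    simp [emb1]
  simp only [concatEquiv, Equiv.trans_apply, h, finSumFinEquiv_symm_apply_castAdd]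

lemma concatEquiv_emb2 (p : Fin (2 * n₂)) :
    concatEquiv n₁ n₂ (emb2 n₁ n₂ p) = Sum.inr p := by
  have h : (finCongr (by ring : 2 * (n₁ + n₂) = 2 * n₁ + 2 * n₂)) (emb2 n₁ n₂ p) =
      Fin.natAdd (2 * n₁) p := by
    apply Fin.ext
    simp [emb2]
  simp only [concatEquiv, Equiv.trans_apply, h, finSumFinEquiv_symm_apply_natAdd]

variable (G₁ : FLD n₁) (G₂ : FLD n₂)

lemma concat_c_emb1 (p : Fin (2 * n₁)) :
    (concatFLD G₁ G₂).c (emb1 n₁ n₂ p) = Fin.castAdd n₂ (G₁.c p) := by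
  show (Sum.elim (Fin.castAdd n₂ ∘ G₁.c) (Fin.natAdd n₁ ∘ G₂.c))
    (concatEquiv n₁ n₂ (emb1 n₁ n₂ p)) = _
  rw [concatEquiv_emb1]
  rfl

lemma concat_c_emb2 (p : Fin (2 * n₂)) :
    (concatFLD G₁ G₂).c (emb2 n₁ n₂ p) = Fin.natAdd n₁ (G₂.c p) := by
  show (Sum.elim (Fin.castAdd n₂ ∘ G₁.c) (Fin.natAdd n₁ ∘ G₂.c))
    (concatEquiv n₁ n₂ (emb2 n₁ n₂ p)) = _
  rw [concatEquiv_emb2]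
  rfl

lemma concat_fr_castAdd (j : Fin n₁) :
    (concatFLD G₁ G₂).fr (Fin.castAdd n₂ j) = G₁.fr j := by
  show (Sum.elim G₁.fr G₂.fr) (finSumFinEquiv.symm (Fin.castAdd n₂ j)) = _
  rw [finSumFinEquiv_symm_apply_castAdd]
  rfl

lemma concat_fr_natAdd (j : Fin n₂) :
    (concatFLD G₁ G₂).fr (Fin.natAdd n₁ j) = G₂.fr j := by
  show (Sum.elim G₁.fr G₂.fr) (finSumFinEquiv.symm (Fin.natAdd n₁ j)) = _
  rw [finSumFinEquiv_symm_apply_natAdd]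
  rfl

lemma concat_other_emb1 (p : Fin (2 * n₁)) :
    otherPt (concatFLD G₁ G₂).c (emb1 n₁ n₂ p) = emb1 n₁ n₂ (otherPt G₁.c p) := by
  refine (eq_otherPt (concatFLD G₁ G₂).two ?_ ?_).symm
  · rw [concat_c_emb1, concat_c_emb1, (otherPt_spec G₁.two p).1]
  · intro h
    exact (otherPt_spec G₁.two p).2 (emb1_strictMono.injective h)

lemma concat_other_emb2 (p : Fin (2 * n₂)) :
    otherPt (concatFLD G₁ G₂).c (emb2 n₁ n₂ p) = emb2 n₁ n₂ (otherPt G₂.c p) := by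
  refine (eq_otherPt (concatFLD G₁ G₂).two ?_ ?_).symm
  · rw [concat_c_emb2, concat_c_emb2, (otherPt_spec G₂.two p).1]
  · intro h
    exact (otherPt_spec G₂.two p).2 (emb2_strictMono.injective h)

/-- Restriction of the choice `ε` to the arcs of the first diagram. -/
def eps1 (n₁ n₂ : ℕ) (ε : Fin (n₁ + n₂) → Bool) : Fin n₁ → Bool :=
  fun j => ε (Fin.castAdd n₂ j)

/-- Restriction of the choice `ε` to the arcs of the second diagram. -/
def eps2 (n₁ n₂ : ℕ) (ε : Fin (n₁ + n₂) → Bool) : Fin n₂ → Bool :=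
  fun j => ε (Fin.natAdd n₁ j)

variable (ε : Fin (n₁ + n₂) → Bool)

lemma concat_side_emb1 (p : Fin (2 * n₁)) :
    psiLSide (concatFLD G₁ G₂) ε (emb1 n₁ n₂ p) = psiLSide G₁ (eps1 n₁ n₂ ε) p := by
  unfold psiLSide
  rw [concat_c_emb1, concat_fr_castAdd, concat_other_emb1]
  have hd : decide (emb1 n₁ n₂ (otherPt G₁.c p) < emb1 n₁ n₂ p) =
      decide (otherPt G₁.c p < p) :=
    decide_eq_decide.mpr ⟨fun h => h, fun h => h⟩
  rw [hd]
  rfl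

lemma concat_side_emb2 (p : Fin (2 * n₂)) :
    psiLSide (concatFLD G₁ G₂) ε (emb2 n₁ n₂ p) = psiLSide G₂ (eps2 n₁ n₂ ε) p := by
  unfold psiLSide
  rw [concat_c_emb2, concat_fr_natAdd, concat_other_emb2]
  have hd : decide (emb2 n₁ n₂ (otherPt G₂.c p) < emb2 n₁ n₂ p) =
      decide (otherPt G₂.c p < p) := by
    refine decide_eq_decide.mpr ?_
    constructor
    · intro h
      have h' : 2 * n₁ + (otherPt G₂.c p).1 < 2 * n₁ + p.1 := h
      exact show (otherPt G₂.c p).1 < p.1 by omega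
    · intro h
      exact show 2 * n₁ + (otherPt G₂.c p).1 < 2 * n₁ + p.1 from Nat.add_lt_add_left h _
  rw [hd]
  rfl

lemma concat_S1 :
    psiLS1 (concatFLD G₁ G₂) ε =
      (psiLS1 G₁ (eps1 n₁ n₂ ε)).image (emb1 n₁ n₂) ∪
      (psiLS1 G₂ (eps2 n₁ n₂ ε)).image (emb2 n₁ n₂) := by
  ext x
  simp only [psiLS1, Finset.mem_filter, Finset.mem_univ, true_and, Finset.mem_union,
    Finset.mem_image]
  constructor
  · intro hx
    by_cases h : x.1 < 2 * n₁
    · have hxx : emb1 n₁ n₂ ⟨x.1, h⟩ = x := Fin.ext rfl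
      refine Or.inl ⟨⟨x.1, h⟩, ?_, hxx⟩
      rw [← concat_side_emb1 G₁ G₂ ε ⟨x.1, h⟩, hxx]
      exact hx
    · have h2 := x.2
      have hxx : emb2 n₁ n₂ ⟨x.1 - 2 * n₁, by omega⟩ = x :=
        Fin.ext (show 2 * n₁ + (x.1 - 2 * n₁) = x.1 by omega)
      refine Or.inr ⟨⟨x.1 - 2 * n₁, by omega⟩, ?_, hxx⟩
      rw [← concat_side_emb2 G₁ G₂ ε ⟨x.1 - 2 * n₁, by omega⟩, hxx]
      exact hx
  · rintro (⟨q, hq, rfl⟩ | ⟨q, hq, rfl⟩)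
    · rw [concat_side_emb1]; exact hq
    · rw [concat_side_emb2]; exact hq

lemma concat_S2 :
    psiLS2 (concatFLD G₁ G₂) ε =
      (psiLS2 G₁ (eps1 n₁ n₂ ε)).image (emb1 n₁ n₂) ∪
      (psiLS2 G₂ (eps2 n₁ n₂ ε)).image (emb2 n₁ n₂) := by
  ext x
  simp only [psiLS2, Finset.mem_filter, Finset.mem_univ, true_and, Finset.mem_union,
    Finset.mem_image]
  constructor
  · intro hx
    by_cases h : x.1 < 2 * n₁
    · have hxx : emb1 n₁ n₂ ⟨x.1, h⟩ = x := Fin.ext rfl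
      refine Or.inl ⟨⟨x.1, h⟩, ?_, hxx⟩
      rw [← concat_side_emb1 G₁ G₂ ε ⟨x.1, h⟩, hxx]
      exact hx
    · have h2 := x.2
      have hxx : emb2 n₁ n₂ ⟨x.1 - 2 * n₁, by omega⟩ = x :=
        Fin.ext (show 2 * n₁ + (x.1 - 2 * n₁) = x.1 by omega)
      refine Or.inr ⟨⟨x.1 - 2 * n₁, by omega⟩, ?_, hxx⟩
      rw [← concat_side_emb2 G₁ G₂ ε ⟨x.1 - 2 * n₁, by omega⟩, hxx]
      exact hx
  · rintro (⟨q, hq, rfl⟩ | ⟨q, hq, rfl⟩)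
    · rw [concat_side_emb1]; exact hq
    · rw [concat_side_emb2]; exact hq

lemma disj_images {s₁ : Finset (Fin (2 * n₁))} {s₂ : Finset (Fin (2 * n₂))} :
    Disjoint (s₁.image (emb1 n₁ n₂)) (s₂.image (emb2 n₁ n₂)) := by
  rw [Finset.disjoint_left]
  rintro x hx1 hx2
  simp only [Finset.mem_image] at hx1 hx2
  obtain ⟨q, _, rfl⟩ := hx1
  obtain ⟨q', _, hq'⟩ := hx2
  have := q.2
  have : (emb2 n₁ n₂ q').1 = (emb1 n₁ n₂ q).1 := by rw [hq']
  simp only [emb1, emb2] at this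
  omega

lemma concat_M1 :
    psiLM1 (concatFLD G₁ G₂) ε = psiLM1 G₁ (eps1 n₁ n₂ ε) + psiLM1 G₂ (eps2 n₁ n₂ ε) := by
  rw [psiLM1, concat_S1, Finset.card_union_of_disjoint disj_images,
    Finset.card_image_of_injective _ emb1_strictMono.injective,
    Finset.card_image_of_injective _ emb2_strictMono.injective]
  rfl

lemma concat_M2 :
    psiLM2 (concatFLD G₁ G₂) ε = psiLM2 G₁ (eps1 n₁ n₂ ε) + psiLM2 G₂ (eps2 n₁ n₂ ε) := by
  rw [psiLM2, concat_S2, Finset.card_union_of_disjoint disj_images,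
    Finset.card_image_of_injective _ emb1_strictMono.injective,
    Finset.card_image_of_injective _ emb2_strictMono.injective]
  rfl


lemma psiLEquiv_inl {n : ℕ} (D : FLD n) (e : Fin n → Bool) (k : Fin (psiLM1 D e)) :
    psiLEquiv D e (Sum.inl k) = (psiLS1 D e).orderEmbOfFin rfl k := by
  show (Equiv.sumCompl _) (Sum.inl _) = _
  rw [Equiv.sumCompl_apply_inl]
  exact Finset.coe_orderIsoOfFin_apply _ _ _

lemma psiLEquiv_inr {n : ℕ} (D : FLD n) (e : Fin n → Bool) (k : Fin (psiLM2 D e)) :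
    psiLEquiv D e (Sum.inr k) = (psiLS2 D e).orderEmbOfFin rfl k.rev := by
  show (Equiv.sumCompl _) (Sum.inr _) = _
  rw [Equiv.sumCompl_apply_inr]
  exact Finset.coe_orderIsoOfFin_apply _ _ _


lemma J1 (i : Fin (psiLM1 G₁ (eps1 n₁ n₂ ε))) (hb : i.1 < psiLM1 (concatFLD G₁ G₂) ε) :
    psiLEquiv (concatFLD G₁ G₂) ε (Sum.inl ⟨i.1, hb⟩) =
      emb1 n₁ n₂ (psiLEquiv G₁ (eps1 n₁ n₂ ε) (Sum.inl i)) := by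
  rw [psiLEquiv_inl, psiLEquiv_inl]
  erw [orderEmb_split _ _ _ _ _ emb1_strictMono emb2_strictMono emb1_lt_emb2
      (concat_S1 G₁ G₂ ε)
      (show (psiLS1 (concatFLD G₁ G₂) ε).card = _ from concat_M1 G₁ G₂ ε) rfl rfl rfl]
  rw [dif_pos (show (⟨i.1, hb⟩ : Fin _).1 < psiLM1 G₁ (eps1 n₁ n₂ ε) from i.2)]
  congr 1

lemma J2 (i : Fin (psiLM1 G₂ (eps2 n₁ n₂ ε)))
    (hb : psiLM1 G₁ (eps1 n₁ n₂ ε) + i.1 < psiLM1 (concatFLD G₁ G₂) ε) :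
    psiLEquiv (concatFLD G₁ G₂) ε (Sum.inl ⟨psiLM1 G₁ (eps1 n₁ n₂ ε) + i.1, hb⟩) =
      emb2 n₁ n₂ (psiLEquiv G₂ (eps2 n₁ n₂ ε) (Sum.inl i)) := by
  rw [psiLEquiv_inl, psiLEquiv_inl]
  erw [orderEmb_split _ _ _ _ _ emb1_strictMono emb2_strictMono emb1_lt_emb2
      (concat_S1 G₁ G₂ ε)
      (show (psiLS1 (concatFLD G₁ G₂) ε).card = _ from concat_M1 G₁ G₂ ε) rfl rfl rfl]
  rw [dif_neg (by dsimp only; omega)]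
  congr 1
  exact congrArg _ (Fin.ext (by dsimp only; omega))

lemma J3 (i : Fin (psiLM2 G₁ (eps1 n₁ n₂ ε)))
    (hb : psiLM2 G₂ (eps2 n₁ n₂ ε) + i.1 < psiLM2 (concatFLD G₁ G₂) ε) :
    psiLEquiv (concatFLD G₁ G₂) ε (Sum.inr ⟨psiLM2 G₂ (eps2 n₁ n₂ ε) + i.1, hb⟩) =
      emb1 n₁ n₂ (psiLEquiv G₁ (eps1 n₁ n₂ ε) (Sum.inr i)) := by
  have hM := concat_M2 G₁ G₂ ε
  have hi := i.2
  rw [psiLEquiv_inr, psiLEquiv_inr]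
  erw [orderEmb_split _ _ _ _ _ emb1_strictMono emb2_strictMono emb1_lt_emb2
      (concat_S2 G₁ G₂ ε)
      (show (psiLS2 (concatFLD G₁ G₂) ε).card = _ from concat_M2 G₁ G₂ ε) rfl rfl rfl]
  have hrev : ((⟨psiLM2 G₂ (eps2 n₁ n₂ ε) + i.1, hb⟩ :
      Fin (psiLM2 (concatFLD G₁ G₂) ε)).rev).1
      = psiLM2 G₁ (eps1 n₁ n₂ ε) - 1 - i.1 := by
    rw [Fin.val_rev]
    dsimp only
    omega
  rw [dif_pos (by rw [hrev]; omega)]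
  congr 1
  refine congrArg _ (Fin.ext ?_)
  dsimp only
  rw [hrev, Fin.val_rev]
  omega

lemma J4 (i : Fin (psiLM2 G₂ (eps2 n₁ n₂ ε))) (hb : i.1 < psiLM2 (concatFLD G₁ G₂) ε) :
    psiLEquiv (concatFLD G₁ G₂) ε (Sum.inr ⟨i.1, hb⟩) =
      emb2 n₁ n₂ (psiLEquiv G₂ (eps2 n₁ n₂ ε) (Sum.inr i)) := by
  have hM := concat_M2 G₁ G₂ ε
  have hi := i.2
  rw [psiLEquiv_inr, psiLEquiv_inr]
  erw [orderEmb_split _ _ _ _ _ emb1_strictMono emb2_strictMono emb1_lt_emb2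
      (concat_S2 G₁ G₂ ε)
      (show (psiLS2 (concatFLD G₁ G₂) ε).card = _ from concat_M2 G₁ G₂ ε) rfl rfl rfl]
  have hrev : ((⟨i.1, hb⟩ : Fin (psiLM2 (concatFLD G₁ G₂) ε)).rev).1
      = psiLM2 G₁ (eps1 n₁ n₂ ε) + (psiLM2 G₂ (eps2 n₁ n₂ ε) - 1 - i.1) := by
    rw [Fin.val_rev]
    dsimp only
    omega
  rw [dif_neg (by rw [hrev]; omega)]
  congr 1
  refine congrArg _ (Fin.ext ?_)
  dsimp only
  rw [hrev, Fin.val_rev]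
  omega


lemma summand_other {n : ℕ} (D : FLD n) (e : Fin n → Bool)
    (p : Fin (psiLM1 D e) ⊕ Fin (psiLM2 D e)) :
    otherPt (psiLSummand D e).c p = (psiLEquiv D e).symm (otherPt D.c (psiLEquiv D e p)) :=
  otherPt_comp_equiv (psiLEquiv D e) D.two p

lemma orbitCount_relOf_cast {m₁ m₂ M₁ M₂ : ℕ} (hm₁ : M₁ = m₁) (hm₂ : M₂ = m₂)
    (O : Fin M₁ ⊕ Fin M₂ → Fin M₁ ⊕ Fin M₂) (O' : Fin m₁ ⊕ Fin m₂ → Fin m₁ ⊕ Fin m₂)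
    (hOO : ∀ p, O' (Sum.map (Fin.cast hm₁) (Fin.cast hm₂) p) =
      Sum.map (Fin.cast hm₁) (Fin.cast hm₂) (O p)) :
    orbitCount (relOf O') = orbitCount (relOf O) := by
  subst hm₁; subst hm₂
  have hid : ∀ p : Fin M₁ ⊕ Fin M₂, Sum.map (Fin.cast rfl) (Fin.cast rfl) p = p := by
    rintro (p | p) <;> rfl
  have hOO' : O' = O := funext fun p => by
    have := hOO p
    rwa [hid, hid] at this
  rw [hOO']

lemma termwise :
    betaDLD (psiLSummand (concatFLD G₁ G₂) ε) =
      orbitCount (relOf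
        (⇑(iota (psiLM1 G₁ (eps1 n₁ n₂ ε)) (psiLM2 G₁ (eps1 n₁ n₂ ε))
            (psiLM1 G₂ (eps2 n₁ n₂ ε)) (psiLM2 G₂ (eps2 n₁ n₂ ε))) ∘
          Sum.map (otherPt (psiLSummand G₁ (eps1 n₁ n₂ ε)).c)
            (otherPt (psiLSummand G₂ (eps2 n₁ n₂ ε)).c) ∘
          ⇑(iota (psiLM1 G₁ (eps1 n₁ n₂ ε)) (psiLM2 G₁ (eps1 n₁ n₂ ε))
            (psiLM1 G₂ (eps2 n₁ n₂ ε)) (psiLM2 G₂ (eps2 n₁ n₂ ε))).symm)) := by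
  have hM1 := concat_M1 G₁ G₂ ε
  have hM2 := concat_M2 G₁ G₂ ε
  rw [betaDLD_eq_relOf]
  have hm2 : psiLM2 G₂ (eps2 n₁ n₂ ε) + psiLM2 G₁ (eps1 n₁ n₂ ε) =
      psiLM2 (concatFLD G₁ G₂) ε := by omega
  refine orbitCount_relOf_cast hM1.symm hm2 _ _ ?_
  intro p
  obtain ⟨X, rfl⟩ : ∃ X, p = iota (psiLM1 G₁ (eps1 n₁ n₂ ε)) (psiLM2 G₁ (eps1 n₁ n₂ ε))
      (psiLM1 G₂ (eps2 n₁ n₂ ε)) (psiLM2 G₂ (eps2 n₁ n₂ ε)) X :=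
    ⟨(iota _ _ _ _).symm p, (Equiv.apply_symm_apply _ p).symm⟩
  rw [show ∀ Y, (⇑(iota (psiLM1 G₁ (eps1 n₁ n₂ ε)) (psiLM2 G₁ (eps1 n₁ n₂ ε))
      (psiLM1 G₂ (eps2 n₁ n₂ ε)) (psiLM2 G₂ (eps2 n₁ n₂ ε))) ∘
      Sum.map (otherPt (psiLSummand G₁ (eps1 n₁ n₂ ε)).c)
        (otherPt (psiLSummand G₂ (eps2 n₁ n₂ ε)).c) ∘
      ⇑(iota (psiLM1 G₁ (eps1 n₁ n₂ ε)) (psiLM2 G₁ (eps1 n₁ n₂ ε))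
        (psiLM1 G₂ (eps2 n₁ n₂ ε)) (psiLM2 G₂ (eps2 n₁ n₂ ε))).symm)
      (iota _ _ _ _ Y) = iota _ _ _ _
        (Sum.map (otherPt (psiLSummand G₁ (eps1 n₁ n₂ ε)).c)
          (otherPt (psiLSummand G₂ (eps2 n₁ n₂ ε)).c) Y)
    from fun Y => by simp]
  rcases X with (i | i) | (i | i)
  · -- point of G₁ on line 1
    have hb : i.1 < psiLM1 (concatFLD G₁ G₂) ε := by have := i.2; omega
    have e1 : Sum.map (Fin.cast hM1.symm) (Fin.cast hm2)
        (iota _ _ _ _ (Sum.inl (Sum.inl i))) =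
        (Sum.inl ⟨i.1, hb⟩ : Fin (psiLM1 (concatFLD G₁ G₂) ε) ⊕
          Fin (psiLM2 (concatFLD G₁ G₂) ε)) := rfl
    rw [e1, summand_other, J1 G₁ G₂ ε i hb, concat_other_emb1]
    have h3 : otherPt G₁.c (psiLEquiv G₁ (eps1 n₁ n₂ ε) (Sum.inl i)) =
        psiLEquiv G₁ (eps1 n₁ n₂ ε)
          (otherPt (psiLSummand G₁ (eps1 n₁ n₂ ε)).c (Sum.inl i)) := by
      rw [summand_other, Equiv.apply_symm_apply]
    rw [h3, Sum.map_inl]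
    rcases h4 : otherPt (psiLSummand G₁ (eps1 n₁ n₂ ε)).c (Sum.inl i) with i' | i'
    · have hb' : i'.1 < psiLM1 (concatFLD G₁ G₂) ε := by have := i'.2; omega
      rw [← J1 G₁ G₂ ε i' hb', Equiv.symm_apply_apply]
      rfl
    · have hb' : psiLM2 G₂ (eps2 n₁ n₂ ε) + i'.1 < psiLM2 (concatFLD G₁ G₂) ε := by
        have := i'.2; omega
      rw [← J3 G₁ G₂ ε i' hb', Equiv.symm_apply_apply]
      rfl
  · -- point of G₁ on line 2
    have hb : psiLM2 G₂ (eps2 n₁ n₂ ε) + i.1 < psiLM2 (concatFLD G₁ G₂) ε := by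
      have := i.2; omega
    have e1 : Sum.map (Fin.cast hM1.symm) (Fin.cast hm2)
        (iota _ _ _ _ (Sum.inl (Sum.inr i))) =
        (Sum.inr ⟨psiLM2 G₂ (eps2 n₁ n₂ ε) + i.1, hb⟩ :
          Fin (psiLM1 (concatFLD G₁ G₂) ε) ⊕ Fin (psiLM2 (concatFLD G₁ G₂) ε)) := rfl
    rw [e1, summand_other, J3 G₁ G₂ ε i hb, concat_other_emb1]
    have h3 : otherPt G₁.c (psiLEquiv G₁ (eps1 n₁ n₂ ε) (Sum.inr i)) =
        psiLEquiv G₁ (eps1 n₁ n₂ ε)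
          (otherPt (psiLSummand G₁ (eps1 n₁ n₂ ε)).c (Sum.inr i)) := by
      rw [summand_other, Equiv.apply_symm_apply]
    rw [h3, Sum.map_inl]
    rcases h4 : otherPt (psiLSummand G₁ (eps1 n₁ n₂ ε)).c (Sum.inr i) with i' | i'
    · have hb' : i'.1 < psiLM1 (concatFLD G₁ G₂) ε := by have := i'.2; omega
      rw [← J1 G₁ G₂ ε i' hb', Equiv.symm_apply_apply]
      rfl
    · have hb' : psiLM2 G₂ (eps2 n₁ n₂ ε) + i'.1 < psiLM2 (concatFLD G₁ G₂) ε := by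
        have := i'.2; omega
      rw [← J3 G₁ G₂ ε i' hb', Equiv.symm_apply_apply]
      rfl
  · -- point of G₂ on line 1
    have hb : psiLM1 G₁ (eps1 n₁ n₂ ε) + i.1 < psiLM1 (concatFLD G₁ G₂) ε := by
      have := i.2; omega
    have e1 : Sum.map (Fin.cast hM1.symm) (Fin.cast hm2)
        (iota _ _ _ _ (Sum.inr (Sum.inl i))) =
        (Sum.inl ⟨psiLM1 G₁ (eps1 n₁ n₂ ε) + i.1, hb⟩ :
          Fin (psiLM1 (concatFLD G₁ G₂) ε) ⊕ Fin (psiLM2 (concatFLD G₁ G₂) ε)) := rfl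
    rw [e1, summand_other, J2 G₁ G₂ ε i hb, concat_other_emb2]
    have h3 : otherPt G₂.c (psiLEquiv G₂ (eps2 n₁ n₂ ε) (Sum.inl i)) =
        psiLEquiv G₂ (eps2 n₁ n₂ ε)
          (otherPt (psiLSummand G₂ (eps2 n₁ n₂ ε)).c (Sum.inl i)) := by
      rw [summand_other, Equiv.apply_symm_apply]
    rw [h3, Sum.map_inr]
    rcases h4 : otherPt (psiLSummand G₂ (eps2 n₁ n₂ ε)).c (Sum.inl i) with i' | i'
    · have hb' : psiLM1 G₁ (eps1 n₁ n₂ ε) + i'.1 < psiLM1 (concatFLD G₁ G₂) ε := by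
        have := i'.2; omega
      rw [← J2 G₁ G₂ ε i' hb', Equiv.symm_apply_apply]
      rfl
    · have hb' : i'.1 < psiLM2 (concatFLD G₁ G₂) ε := by have := i'.2; omega
      rw [← J4 G₁ G₂ ε i' hb', Equiv.symm_apply_apply]
      rfl
  · -- point of G₂ on line 2
    have hb : i.1 < psiLM2 (concatFLD G₁ G₂) ε := by have := i.2; omega
    have e1 : Sum.map (Fin.cast hM1.symm) (Fin.cast hm2)
        (iota _ _ _ _ (Sum.inr (Sum.inr i))) =
        (Sum.inr ⟨i.1, hb⟩ : Fin (psiLM1 (concatFLD G₁ G₂) ε) ⊕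
          Fin (psiLM2 (concatFLD G₁ G₂) ε)) := rfl
    rw [e1, summand_other, J4 G₁ G₂ ε i hb, concat_other_emb2]
    have h3 : otherPt G₂.c (psiLEquiv G₂ (eps2 n₁ n₂ ε) (Sum.inr i)) =
        psiLEquiv G₂ (eps2 n₁ n₂ ε)
          (otherPt (psiLSummand G₂ (eps2 n₁ n₂ ε)).c (Sum.inr i)) := by
      rw [summand_other, Equiv.apply_symm_apply]
    rw [h3, Sum.map_inr]
    rcases h4 : otherPt (psiLSummand G₂ (eps2 n₁ n₂ ε)).c (Sum.inr i) with i' | i'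
    · have hb' : psiLM1 G₁ (eps1 n₁ n₂ ε) + i'.1 < psiLM1 (concatFLD G₁ G₂) ε := by
        have := i'.2; omega
      rw [← J2 G₁ G₂ ε i' hb', Equiv.symm_apply_apply]
      rfl
    · have hb' : i'.1 < psiLM2 (concatFLD G₁ G₂) ε := by have := i'.2; omega
      rw [← J4 G₁ G₂ ε i' hb', Equiv.symm_apply_apply]
      rfl


/-- Block swap of the arc labels. -/
def sigmaSwap (n₁ n₂ : ℕ) : Fin (n₁ + n₂) ≃ Fin (n₂ + n₁) :=
  finSumFinEquiv.symm.trans ((Equiv.sumComm (Fin n₁) (Fin n₂)).trans finSumFinEquiv)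

lemma heps1 : eps1 n₂ n₁ (ε ∘ ⇑(sigmaSwap n₁ n₂).symm) = eps2 n₁ n₂ ε := by
  funext j
  show ε ((sigmaSwap n₁ n₂).symm (Fin.castAdd n₁ j)) = ε (Fin.natAdd n₁ j)
  congr 1
  simp [sigmaSwap]

lemma heps2 : eps2 n₂ n₁ (ε ∘ ⇑(sigmaSwap n₁ n₂).symm) = eps1 n₁ n₂ ε := by
  funext j
  show ε ((sigmaSwap n₁ n₂).symm (Fin.natAdd n₂ j)) = ε (Fin.castAdd n₂ j)
  congr 1
  simp [sigmaSwap]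

lemma termwise_comm :
    betaDLD (psiLSummand (concatFLD G₁ G₂) ε) =
      betaDLD (psiLSummand (concatFLD G₂ G₁) (ε ∘ ⇑(sigmaSwap n₁ n₂).symm)) := by
  rw [termwise G₁ G₂ ε, termwise G₂ G₁ (ε ∘ ⇑(sigmaSwap n₁ n₂).symm), heps1, heps2]
  exact master _ _ (otherPt_bijective (psiLSummand G₁ (eps1 n₁ n₂ ε)).two)
    (otherPt_bijective (psiLSummand G₂ (eps2 n₁ n₂ ε)).two)

end App

end Stmt10

/-- For any two framed linear diagrams `G₁` and `G₂`,
`w_l(ψ_l(G₁ # G₂)) = w_l(ψ_l(G₂ # G₁))`. -/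
theorem wDLD_psiL_concat_comm {n₁ n₂ : ℕ} (G₁ : FLD n₁) (G₂ : FLD n₂) :
    wDLD (psiL (concatFLD G₁ G₂)) = wDLD (psiL (concatFLD G₂ G₁)) := by
  unfold psiL
  rw [map_sum, map_sum]
  refine Fintype.sum_equiv
    (Equiv.arrowCongr (Stmt10.sigmaSwap n₁ n₂) (Equiv.refl Bool)) _ _ ?_
  intro ε
  have h1 : wDLD (of (psiLSummandAll (concatFLD G₁ G₂) ε)) =
      ((betaDLD (psiLSummand (concatFLD G₁ G₂) ε) : ℕ) : ℤ) :=
    FreeAbelianGroup.lift_apply_of _ _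
  have harr : (Equiv.arrowCongr (Stmt10.sigmaSwap n₁ n₂) (Equiv.refl Bool)) ε =
      ε ∘ ⇑(Stmt10.sigmaSwap n₁ n₂).symm := by
    funext j
    simp [Equiv.arrowCongr]
  have h2 : wDLD (of (psiLSummandAll (concatFLD G₂ G₁)
      ((Equiv.arrowCongr (Stmt10.sigmaSwap n₁ n₂) (Equiv.refl Bool)) ε))) =
      ((betaDLD (psiLSummand (concatFLD G₂ G₁)
        ((Equiv.arrowCongr (Stmt10.sigmaSwap n₁ n₂) (Equiv.refl Bool)) ε)) : ℕ) : ℤ) :=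
    FreeAbelianGroup.lift_apply_of _ _
  rw [h1, h2, harr]
  exact congrArg Nat.cast (Stmt10.termwise_comm G₁ G₂ ε)
end

section
/- β of a double chord diagram is invariant under simultaneously reversing the orientations of both core circles, and under the isomorphism exchanging the two core circles. -/
open FreeAbelianGroup

/-! ### Auxiliary lemmas for Statement 15 -/

section AuxBeta

lemma exists_other' {α : Type} [Fintype α] [DecidableEq α] {n : ℕ} {c : α → Fin n}
    (htwo : ∀ j, Fintype.card {p // c p = j} = 2) (p : α) :
    ∃ q, c q = c p ∧ q ≠ p := by
  have h1 : 1 < Fintype.card {x // c x = c p} := by rw [htwo (c p)]; omega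
  obtain ⟨a, b, hab⟩ := Fintype.exists_pair_of_one_lt_card h1
  rcases eq_or_ne a.1 p with h | h
  · exact ⟨b.1, b.2, fun hb => hab (Subtype.ext (by rw [h, hb]))⟩
  · exact ⟨a.1, a.2, h⟩

lemma other_unique' {α : Type} [Fintype α] [DecidableEq α] {n : ℕ} {c : α → Fin n}
    (htwo : ∀ j, Fintype.card {p // c p = j} = 2) {p q q' : α}
    (h1 : c q = c p) (h2 : q ≠ p) (h3 : c q' = c p) (h4 : q' ≠ p) : q = q' := by
  by_contra hne
  have hd1 : (⟨p, rfl⟩ : {x // c x = c p}) ≠ ⟨q, h1⟩ := fun h => h2 (congrArg Subtype.val h).symm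
  have hd2 : (⟨p, rfl⟩ : {x // c x = c p}) ≠ ⟨q', h3⟩ := fun h => h4 (congrArg Subtype.val h).symm
  have hd3 : (⟨q, h1⟩ : {x // c x = c p}) ≠ ⟨q', h3⟩ := fun h => hne (congrArg Subtype.val h)
  have hcard : ({⟨p, rfl⟩, ⟨q, h1⟩, ⟨q', h3⟩} : Finset {x // c x = c p}).card = 3 :=
    Finset.card_eq_three.mpr ⟨_, _, _, hd1, hd2, hd3, rfl⟩
  have hle := Finset.card_le_univ ({⟨p, rfl⟩, ⟨q, h1⟩, ⟨q', h3⟩} : Finset {x // c x = c p})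
  rw [hcard, htwo (c p)] at hle
  omega

lemma otherPt_eq' {α : Type} [Fintype α] [DecidableEq α] {n : ℕ} {c : α → Fin n}
    (htwo : ∀ j, Fintype.card {p // c p = j} = 2) {p q : α}
    (hq : c q = c p) (hne : q ≠ p) : otherPt c p = q := by
  have hNE : (Finset.univ.filter fun r => c r = c p ∧ r ≠ p).Nonempty :=
    ⟨q, by simp [hq, hne]⟩
  unfold otherPt
  rw [dif_pos hNE]
  have hspec := hNE.choose_spec
  simp only [Finset.mem_filter] at hspec
  exact other_unique' htwo hspec.2.1 hspec.2.2 hq hne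

lemma otherPt_spec' {α : Type} [Fintype α] [DecidableEq α] {n : ℕ} {c : α → Fin n}
    (htwo : ∀ j, Fintype.card {p // c p = j} = 2) (p : α) :
    c (otherPt c p) = c p ∧ otherPt c p ≠ p := by
  obtain ⟨q, hq, hne⟩ := exists_other' htwo p
  rw [otherPt_eq' htwo hq hne]
  exact ⟨hq, hne⟩

lemma otherPt_invol' {α : Type} [Fintype α] [DecidableEq α] {n : ℕ} {c : α → Fin n}
    (htwo : ∀ j, Fintype.card {p // c p = j} = 2) (p : α) :
    otherPt c (otherPt c p) = p := by
  obtain ⟨h1, h2⟩ := otherPt_spec' htwo p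
  exact otherPt_eq' htwo h1.symm (Ne.symm h2)

lemma two_comp' {α β : Type} [Fintype α] [DecidableEq α] [Fintype β] [DecidableEq β]
    {n : ℕ} {c : α → Fin n} (htwo : ∀ j, Fintype.card {p // c p = j} = 2)
    (e : β ≃ α) : ∀ j, Fintype.card {p // (c ∘ e) p = j} = 2 := fun j =>
  (Fintype.card_congr (e.subtypeEquiv fun _ => Iff.rfl)).trans (htwo j)

lemma otherPt_comp' {α β : Type} [Fintype α] [DecidableEq α] [Fintype β] [DecidableEq β]
    {n : ℕ} {c : α → Fin n} (htwo : ∀ j, Fintype.card {p // c p = j} = 2)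
    (e : β ≃ α) (p : β) :
    otherPt (c ∘ e) p = e.symm (otherPt c (e p)) := by
  obtain ⟨h1, h2⟩ := otherPt_spec' htwo (e p)
  refine otherPt_eq' (two_comp' htwo e) ?_ ?_
  · show c (e (e.symm _)) = c (e p)
    rw [Equiv.apply_symm_apply]
    exact h1
  · intro h
    apply h2
    rw [← Equiv.apply_symm_apply e (otherPt c (e p)), h]

lemma eqvGen_map' {α β : Type} (e : α ≃ β) (r : β → β → Prop) (a b : α)
    (h : Relation.EqvGen (fun p q => r (e p) (e q)) a b) :
    Relation.EqvGen r (e a) (e b) := by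
  induction h with
  | rel x y hxy => exact Relation.EqvGen.rel _ _ hxy
  | refl x => exact Relation.EqvGen.refl _
  | symm x y _ ih => exact Relation.EqvGen.symm _ _ ih
  | trans x y z _ _ ih1 ih2 => exact Relation.EqvGen.trans _ _ _ ih1 ih2

lemma eqvGen_map_symm' {α β : Type} (e : α ≃ β) (r : β → β → Prop) (a b : β)
    (h : Relation.EqvGen r a b) :
    Relation.EqvGen (fun p q => r (e p) (e q)) (e.symm a) (e.symm b) := by
  induction h with
  | rel x y hxy =>
    exact Relation.EqvGen.rel _ _ (by simp only [Equiv.apply_symm_apply]; exact hxy)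
  | refl x => exact Relation.EqvGen.refl _
  | symm x y _ ih => exact Relation.EqvGen.symm _ _ ih
  | trans x y z _ _ ih1 ih2 => exact Relation.EqvGen.trans _ _ _ ih1 ih2

lemma orbitCount_conj' {α β : Type} (e : α ≃ β) (r : β → β → Prop) :
    orbitCount (fun p q => r (e p) (e q)) = orbitCount r := by
  apply Nat.card_congr
  refine Quotient.congr e fun a b => ⟨eqvGen_map' e r a b, fun h => ?_⟩
  have := eqvGen_map_symm' e r _ _ h
  simp at this
  exact this

lemma orbitCount_congr' {α : Type} {r s : α → α → Prop} (h : ∀ a b, r a b ↔ s a b) :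
    orbitCount r = orbitCount s := by
  have : r = s := funext fun a => funext fun b => propext (h a b)
  rw [this]

lemma eqvGen_swap_mp' {α : Type} (r : α → α → Prop) (a b : α)
    (h : Relation.EqvGen r a b) : Relation.EqvGen (fun p q => r q p) a b := by
  induction h with
  | rel x y hxy => exact Relation.EqvGen.symm _ _ (Relation.EqvGen.rel _ _ hxy)
  | refl x => exact Relation.EqvGen.refl _
  | symm x y _ ih => exact Relation.EqvGen.symm _ _ ih
  | trans x y z _ _ ih1 ih2 => exact Relation.EqvGen.trans _ _ _ ih1 ih2

lemma orbitCount_swap' {α : Type} (r : α → α → Prop) :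
    orbitCount (fun p q => r q p) = orbitCount r := by
  apply Nat.card_congr
  exact Quotient.congr (Equiv.refl α) fun a b =>
    ⟨fun h => eqvGen_swap_mp' _ a b h, fun h => eqvGen_swap_mp' _ a b h⟩

lemma cyc_rev_cyc_rev {m : ℕ} (i : Fin m) :
    cyc (Fin.rev (cyc (Fin.rev i))) = i := by
  have hm : 0 < m := i.pos
  have hi := i.2
  apply Fin.ext
  simp only [cyc, Fin.val_rev]
  rcases Nat.eq_zero_or_pos i.1 with h | h
  · have e1 : m - (i.1 + 1) + 1 = m := by omega
    rw [e1, Nat.mod_self]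
    have e2 : m - (0 + 1) + 1 = m := by omega
    rw [e2, Nat.mod_self]
    omega
  · have e1 : m - (i.1 + 1) + 1 = m - i.1 := by omega
    have e15 : (m - i.1) % m = m - i.1 := Nat.mod_eq_of_lt (by omega)
    rw [e1, e15]
    have e2 : m - (m - i.1 + 1) + 1 = i.1 := by omega
    rw [e2, Nat.mod_eq_of_lt hi]

end AuxBeta

/-- `β` of a double chord diagram is invariant under
simultaneously reversing the orientations of both core circles, and under the
isomorphism exchanging the two core circles. -/
theorem betaDCD_revBoth_and_swapCirc {n m₁ m₂ : ℕ} (G : DCD n m₁ m₂) :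
    betaDCD (revBoth G) = betaDCD G ∧ betaDCD (swapCirc G) = betaDCD G := by
  have htwo := G.two
  set o : Fin m₁ ⊕ Fin m₂ → Fin m₁ ⊕ Fin m₂ := otherPt G.c with ho
  have oinv : ∀ p, o (o p) = p := fun p => otherPt_invol' htwo p
  have oinj : Function.Injective o := Function.LeftInverse.injective oinv
  constructor
  · -- revBoth
    set E : (Fin m₁ ⊕ Fin m₂) ≃ (Fin m₁ ⊕ Fin m₂) :=
      Equiv.sumCongr (Fin.revPerm (n := m₁)) (Fin.revPerm (n := m₂)) with hE
    have hEE : ∀ x, E (E x) = x := by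
      rintro (a | a) <;> simp [hE]
    have hEsymm : ∀ x, E.symm x = E x := fun x => by
      conv_lhs => rw [← hEE x]
      rw [Equiv.symm_apply_apply]
    have hinv : ∀ x, cycS (E (cycS (E x))) = x := by
      rintro (a | a) <;> simp [hE, cycS, cyc_rev_cyc_rev]
    have hcomp : ∀ p, otherPt (revBoth G).c p = E (o (E p)) := by
      intro p
      have h := otherPt_comp' htwo E p
      rw [hEsymm] at h
      exact h
    have key : orbitCount (fun p q => cycS (otherPt (revBoth G).c p) = q)
        = orbitCount (fun p q => cycS (o p) = q) := by
      have step1 : orbitCount (fun p q => cycS (otherPt (revBoth G).c p) = q)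
          = orbitCount (fun a b => cycS (E (o a)) = E b) := by
        rw [← orbitCount_conj' E (fun a b => cycS (E (o a)) = E b)]
        refine orbitCount_congr' fun p q => ?_
        rw [hcomp p, hEE q]
      have step2 : orbitCount (fun a b : Fin m₁ ⊕ Fin m₂ => cycS (E (o a)) = E b)
          = orbitCount (fun a b => cycS (E (o b)) = E a) :=
        (orbitCount_swap' (fun a b => cycS (E (o a)) = E b)).symm
      have step3 : orbitCount (fun a b : Fin m₁ ⊕ Fin m₂ => cycS (E (o b)) = E a)
          = orbitCount (fun a b => o (cycS a) = b) := by
        refine orbitCount_congr' fun a b => ?_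
        constructor
        · intro h
          have h2 := hinv (o b)
          rw [h, hEE] at h2
          rw [h2]
          exact oinv b
        · intro h
          have h2 : o b = cycS a := by rw [← h, oinv]
          have h3 := hinv (E a)
          rw [hEE] at h3
          rw [h2]
          exact h3
      have step4 : orbitCount (fun a b : Fin m₁ ⊕ Fin m₂ => o (cycS a) = b)
          = orbitCount (fun p q => cycS (o p) = q) := by
        rw [← orbitCount_conj' (⟨o, o, oinv, oinv⟩ :
          (Fin m₁ ⊕ Fin m₂) ≃ (Fin m₁ ⊕ Fin m₂)) (fun a b => o (cycS a) = b)]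
        refine (orbitCount_congr' fun p q => ?_).symm
        simp only [Equiv.coe_fn_mk]
        constructor
        · intro h
          exact congrArg o h
        · intro h
          exact oinj h
      rw [step1, step2, step3, step4]
    simp only [betaDCD]
    rw [key]
  · -- swapCirc
    set E2 : (Fin m₂ ⊕ Fin m₁) ≃ (Fin m₁ ⊕ Fin m₂) :=
      Equiv.sumComm (Fin m₂) (Fin m₁) with hE2
    have hcomm : ∀ x : Fin m₁ ⊕ Fin m₂, cycS (E2.symm x) = E2.symm (cycS x) := by
      rintro (a | a) <;> simp [hE2, cycS]
    have key : orbitCount (fun p q => cycS (otherPt (swapCirc G).c p) = q)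
        = orbitCount (fun p q => cycS (o p) = q) := by
      rw [← orbitCount_conj' E2 (fun p q => cycS (o p) = q)]
      refine orbitCount_congr' fun p q => ?_
      rw [show otherPt (swapCirc G).c p = E2.symm (o (E2 p)) from otherPt_comp' htwo E2 p,
        hcomm, Equiv.symm_apply_eq]
    simp only [betaDCD]
    rw [key]
    ring
end
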